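/- arXiv:1909.13237 — 9 statements merged into one kernel-verified Lean document; each statement's English description precedes it below -/
import Mathlib

section
/- Let S be an involutive R-matrix on H and R an involutive R-matrix on K. Then the box-sum S ⊞ R, defined as the operator on (H⊕K)⊗(H⊕K) ≅ (H⊗H) ⊕ (K⊗K) ⊕ (H⊗K) ⊕ (K⊗H) which acts as S on H⊗H, as R on K⊗K, and as the tensor flip on (H⊗K) ⊕ (K⊗H), is a unitary involutive solution of the Yang-Baxter equation on (H⊕K)⊗(H⊕K). -/
open Matrix

def S12 {ι : Type*} [DecidableEq ι] (S : Matrix (ι × ι) (ι × ι) ℂ) :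
    Matrix (ι × ι × ι) (ι × ι × ι) ℂ :=
  Matrix.of fun x y => S (x.1, x.2.1) (y.1, y.2.1) * (if x.2.2 = y.2.2 then 1 else 0)

def S23 {ι : Type*} [DecidableEq ι] (S : Matrix (ι × ι) (ι × ι) ℂ) :
    Matrix (ι × ι × ι) (ι × ι × ι) ℂ :=
  Matrix.of fun x y => (if x.1 = y.1 then 1 else 0) * S (x.2.1, x.2.2) (y.2.1, y.2.2)

def YangBaxter {ι : Type*} [Fintype ι] [DecidableEq ι]
    (S : Matrix (ι × ι) (ι × ι) ℂ) : Prop :=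
  S12 S * S23 S * S12 S = S23 S * S12 S * S23 S

/-- An involutive R-matrix: a unitary involutive solution of the Yang-Baxter equation. -/
def IsRMatrix {ι : Type*} [Fintype ι] [DecidableEq ι]
    (S : Matrix (ι × ι) (ι × ι) ℂ) : Prop :=
  Sᴴ = S ∧ S * S = 1 ∧ YangBaxter S

/-- The box-sum `S ⊞ R` on `(H ⊕ K) ⊗ (H ⊕ K)`: it acts as `S` on `H ⊗ H`, as `R` on
`K ⊗ K`, and as the tensor flip on `(H ⊗ K) ⊕ (K ⊗ H)`. -/
def boxSum {ι κ : Type*} [DecidableEq ι] [DecidableEq κ]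
    (S : Matrix (ι × ι) (ι × ι) ℂ) (R : Matrix (κ × κ) (κ × κ) ℂ) :
    Matrix ((ι ⊕ κ) × (ι ⊕ κ)) ((ι ⊕ κ) × (ι ⊕ κ)) ℂ :=
  Matrix.of fun x y =>
    match x, y with
    | (Sum.inl a, Sum.inl b), (Sum.inl c, Sum.inl d) => S (a, b) (c, d)
    | (Sum.inr a, Sum.inr b), (Sum.inr c, Sum.inr d) => R (a, b) (c, d)
    | (Sum.inl a, Sum.inr b), (Sum.inr c, Sum.inl d) => if a = d ∧ b = c then 1 else 0
    | (Sum.inr a, Sum.inl b), (Sum.inl c, Sum.inr d) => if a = d ∧ b = c then 1 else 0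
    | _, _ => 0

@[simp] lemma box1 {ι κ : Type*} [DecidableEq ι] [DecidableEq κ]
    (S : Matrix (ι × ι) (ι × ι) ℂ) (R : Matrix (κ × κ) (κ × κ) ℂ)
    (a : ι) (b : ι) (c : ι) (d : ι) :
    boxSum S R (Sum.inl a, Sum.inl b) (Sum.inl c, Sum.inl d) = S (a, b) (c, d) := rfl
@[simp] lemma box2 {ι κ : Type*} [DecidableEq ι] [DecidableEq κ]
    (S : Matrix (ι × ι) (ι × ι) ℂ) (R : Matrix (κ × κ) (κ × κ) ℂ)
    (a : ι) (b : ι) (c : ι) (d : κ) :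
    boxSum S R (Sum.inl a, Sum.inl b) (Sum.inl c, Sum.inr d) = 0 := rfl
@[simp] lemma box3 {ι κ : Type*} [DecidableEq ι] [DecidableEq κ]
    (S : Matrix (ι × ι) (ι × ι) ℂ) (R : Matrix (κ × κ) (κ × κ) ℂ)
    (a : ι) (b : ι) (c : κ) (d : ι) :
    boxSum S R (Sum.inl a, Sum.inl b) (Sum.inr c, Sum.inl d) = 0 := rfl
@[simp] lemma box4 {ι κ : Type*} [DecidableEq ι] [DecidableEq κ]
    (S : Matrix (ι × ι) (ι × ι) ℂ) (R : Matrix (κ × κ) (κ × κ) ℂ)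
    (a : ι) (b : ι) (c : κ) (d : κ) :
    boxSum S R (Sum.inl a, Sum.inl b) (Sum.inr c, Sum.inr d) = 0 := rfl
@[simp] lemma box5 {ι κ : Type*} [DecidableEq ι] [DecidableEq κ]
    (S : Matrix (ι × ι) (ι × ι) ℂ) (R : Matrix (κ × κ) (κ × κ) ℂ)
    (a : ι) (b : κ) (c : ι) (d : ι) :
    boxSum S R (Sum.inl a, Sum.inr b) (Sum.inl c, Sum.inl d) = 0 := rfl
@[simp] lemma box6 {ι κ : Type*} [DecidableEq ι] [DecidableEq κ]
    (S : Matrix (ι × ι) (ι × ι) ℂ) (R : Matrix (κ × κ) (κ × κ) ℂ)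
    (a : ι) (b : κ) (c : ι) (d : κ) :
    boxSum S R (Sum.inl a, Sum.inr b) (Sum.inl c, Sum.inr d) = 0 := rfl
@[simp] lemma box7 {ι κ : Type*} [DecidableEq ι] [DecidableEq κ]
    (S : Matrix (ι × ι) (ι × ι) ℂ) (R : Matrix (κ × κ) (κ × κ) ℂ)
    (a : ι) (b : κ) (c : κ) (d : ι) :
    boxSum S R (Sum.inl a, Sum.inr b) (Sum.inr c, Sum.inl d) = if a = d ∧ b = c then (1:ℂ) else 0 := rfl
@[simp] lemma box8 {ι κ : Type*} [DecidableEq ι] [DecidableEq κ]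
    (S : Matrix (ι × ι) (ι × ι) ℂ) (R : Matrix (κ × κ) (κ × κ) ℂ)
    (a : ι) (b : κ) (c : κ) (d : κ) :
    boxSum S R (Sum.inl a, Sum.inr b) (Sum.inr c, Sum.inr d) = 0 := rfl
@[simp] lemma box9 {ι κ : Type*} [DecidableEq ι] [DecidableEq κ]
    (S : Matrix (ι × ι) (ι × ι) ℂ) (R : Matrix (κ × κ) (κ × κ) ℂ)
    (a : κ) (b : ι) (c : ι) (d : ι) :
    boxSum S R (Sum.inr a, Sum.inl b) (Sum.inl c, Sum.inl d) = 0 := rfl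
@[simp] lemma box10 {ι κ : Type*} [DecidableEq ι] [DecidableEq κ]
    (S : Matrix (ι × ι) (ι × ι) ℂ) (R : Matrix (κ × κ) (κ × κ) ℂ)
    (a : κ) (b : ι) (c : ι) (d : κ) :
    boxSum S R (Sum.inr a, Sum.inl b) (Sum.inl c, Sum.inr d) = if a = d ∧ b = c then (1:ℂ) else 0 := rfl
@[simp] lemma box11 {ι κ : Type*} [DecidableEq ι] [DecidableEq κ]
    (S : Matrix (ι × ι) (ι × ι) ℂ) (R : Matrix (κ × κ) (κ × κ) ℂ)
    (a : κ) (b : ι) (c : κ) (d : ι) :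
    boxSum S R (Sum.inr a, Sum.inl b) (Sum.inr c, Sum.inl d) = 0 := rfl
@[simp] lemma box12 {ι κ : Type*} [DecidableEq ι] [DecidableEq κ]
    (S : Matrix (ι × ι) (ι × ι) ℂ) (R : Matrix (κ × κ) (κ × κ) ℂ)
    (a : κ) (b : ι) (c : κ) (d : κ) :
    boxSum S R (Sum.inr a, Sum.inl b) (Sum.inr c, Sum.inr d) = 0 := rfl
@[simp] lemma box13 {ι κ : Type*} [DecidableEq ι] [DecidableEq κ]
    (S : Matrix (ι × ι) (ι × ι) ℂ) (R : Matrix (κ × κ) (κ × κ) ℂ)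
    (a : κ) (b : κ) (c : ι) (d : ι) :
    boxSum S R (Sum.inr a, Sum.inr b) (Sum.inl c, Sum.inl d) = 0 := rfl
@[simp] lemma box14 {ι κ : Type*} [DecidableEq ι] [DecidableEq κ]
    (S : Matrix (ι × ι) (ι × ι) ℂ) (R : Matrix (κ × κ) (κ × κ) ℂ)
    (a : κ) (b : κ) (c : ι) (d : κ) :
    boxSum S R (Sum.inr a, Sum.inr b) (Sum.inl c, Sum.inr d) = 0 := rfl
@[simp] lemma box15 {ι κ : Type*} [DecidableEq ι] [DecidableEq κ]
    (S : Matrix (ι × ι) (ι × ι) ℂ) (R : Matrix (κ × κ) (κ × κ) ℂ)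
    (a : κ) (b : κ) (c : κ) (d : ι) :
    boxSum S R (Sum.inr a, Sum.inr b) (Sum.inr c, Sum.inl d) = 0 := rfl
@[simp] lemma box16 {ι κ : Type*} [DecidableEq ι] [DecidableEq κ]
    (S : Matrix (ι × ι) (ι × ι) ℂ) (R : Matrix (κ × κ) (κ × κ) ℂ)
    (a : κ) (b : κ) (c : κ) (d : κ) :
    boxSum S R (Sum.inr a, Sum.inr b) (Sum.inr c, Sum.inr d) = R (a, b) (c, d) := rfl


lemma mul3L {α : Type*} [Fintype α] [DecidableEq α] (M : Matrix (α × α) (α × α) ℂ)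
    (x1 x2 x3 y1 y2 y3 : α) :
    (S12 M * S23 M * S12 M) (x1, x2, x3) (y1, y2, y3) =
      ∑ u1 : α, ∑ v2 : α, ∑ u2 : α, M (x1, x2) (u1, u2) * M (u2, x3) (v2, y3) *
        M (u1, v2) (y1, y2) := by
  simp [Matrix.mul_apply, S12, S23, Fintype.sum_prod_type, mul_ite, ite_mul,
    Finset.mul_sum, Finset.sum_mul]

lemma mul3R {α : Type*} [Fintype α] [DecidableEq α] (M : Matrix (α × α) (α × α) ℂ)
    (x1 x2 x3 y1 y2 y3 : α) :
    (S23 M * S12 M * S23 M) (x1, x2, x3) (y1, y2, y3) =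
      ∑ v2 : α, ∑ u2 : α, ∑ u1 : α, M (x2, x3) (u1, u2) *
        M (x1, u1) (y1, v2) * M (v2, u2) (y2, y3) := by
  simp [Matrix.mul_apply, S12, S23, Fintype.sum_prod_type, mul_ite, ite_mul,
    Finset.mul_sum, Finset.sum_mul]

set_option maxHeartbeats 3000000 in

/-- the box-sum of two involutive R-matrices is a unitary involutive
solution of the Yang-Baxter equation on `(H ⊕ K) ⊗ (H ⊕ K)`. -/
theorem statement2 {ι κ : Type*} [Fintype ι] [DecidableEq ι] [Fintype κ] [DecidableEq κ]
    (S : Matrix (ι × ι) (ι × ι) ℂ) (R : Matrix (κ × κ) (κ × κ) ℂ)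
    (hS : IsRMatrix S) (hR : IsRMatrix R) : IsRMatrix (boxSum S R) := by
  refine ⟨?_, ?_, ?_⟩
  · -- Hermitian
    have hS1 : ∀ p q : ι × ι, star (S q p) = S p q := fun p q => by
      rw [← Matrix.conjTranspose_apply, hS.1]
    have hR1 : ∀ p q : κ × κ, star (R q p) = R p q := fun p q => by
      rw [← Matrix.conjTranspose_apply, hR.1]
    ext ⟨x1, x2⟩ ⟨y1, y2⟩
    rcases x1 with a1 | a1 <;> rcases x2 with a2 | a2 <;>
      rcases y1 with b1 | b1 <;> rcases y2 with b2 | b2 <;>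
      simp [Matrix.conjTranspose_apply, apply_ite (star : ℂ → ℂ), hS1, hR1, eq_comm,
        and_comm]
  · -- involution
    have hS2 : ∀ a b c d : ι,
        (∑ u1, ∑ u2, S (a, b) (u1, u2) * S (u1, u2) (c, d)) =
          if a = c ∧ b = d then 1 else 0 := by
      intro a b c d
      have := congrFun (congrFun hS.2.1 (a, b)) (c, d)
      simpa [Matrix.mul_apply, Fintype.sum_prod_type, Matrix.one_apply, Prod.ext_iff]
        using this
    have hR2 : ∀ a b c d : κ,
        (∑ u1, ∑ u2, R (a, b) (u1, u2) * R (u1, u2) (c, d)) =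
          if a = c ∧ b = d then 1 else 0 := by
      intro a b c d
      have := congrFun (congrFun hR.2.1 (a, b)) (c, d)
      simpa [Matrix.mul_apply, Fintype.sum_prod_type, Matrix.one_apply, Prod.ext_iff]
        using this
    ext ⟨x1, x2⟩ ⟨y1, y2⟩
    rw [Matrix.mul_apply]
    rcases x1 with a1 | a1 <;> rcases x2 with a2 | a2 <;>
      rcases y1 with b1 | b1 <;> rcases y2 with b2 | b2 <;>
      simp [Fintype.sum_prod_type, Fintype.sum_sum_type, mul_ite, ite_mul,
        Finset.sum_ite_eq, Finset.sum_ite_eq', hS2, hR2, ite_and,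
        Matrix.one_apply, Prod.ext_iff, and_comm]
  · -- Yang–Baxter
    have hSe : ∀ a b c d e f : ι,
        (∑ u1, ∑ v2, ∑ u2, S (a, b) (u1, u2) * S (u2, c) (v2, f) * S (u1, v2) (d, e)) =
        ∑ v2, ∑ u2, ∑ u1, S (b, c) (u1, u2) * S (a, u1) (d, v2) * S (v2, u2) (e, f) := by
      intro a b c d e f
      rw [← mul3L, ← mul3R, hS.2.2]
    have hRe : ∀ a b c d e f : κ,
        (∑ u1, ∑ v2, ∑ u2, R (a, b) (u1, u2) * R (u2, c) (v2, f) * R (u1, v2) (d, e)) =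
        ∑ v2, ∑ u2, ∑ u1, R (b, c) (u1, u2) * R (a, u1) (d, v2) * R (v2, u2) (e, f) := by
      intro a b c d e f
      rw [← mul3L, ← mul3R, hR.2.2]
    show S12 _ * S23 _ * S12 _ = S23 _ * S12 _ * S23 _
    ext ⟨x1, x2, x3⟩ ⟨y1, y2, y3⟩
    rw [mul3L, mul3R]
    rcases x1 with a1 | a1 <;> rcases x2 with a2 | a2 <;> rcases x3 with a3 | a3 <;>
      rcases y1 with b1 | b1 <;> rcases y2 with b2 | b2 <;> rcases y3 with b3 | b3 <;>
      simp [Fintype.sum_sum_type, mul_ite, ite_mul, Finset.mul_sum, Finset.sum_mul,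
        Finset.sum_ite_eq, Finset.sum_ite_eq', hSe, hRe, ite_and]
end

section
/- Let S be an involutive R-matrix on H and R an involutive R-matrix on K. Then the box-product S ⊠ R := F₂ (S ⊗ R) F₂ on (H⊗K)⊗(H⊗K), where F₂ is the unitary exchanging the second and third tensor factors of H⊗K⊗H⊗K, is a unitary involutive solution of the Yang-Baxter equation on (H⊗K)⊗(H⊗K). -/
open Matrix

/-- The box-product `S ⊠ R = F₂ (S ⊗ R) F₂` on `(H ⊗ K) ⊗ (H ⊗ K)`, where `F₂`
exchanges the middle two tensor factors of `H ⊗ K ⊗ H ⊗ K`. In matrix elements: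
`(S ⊠ R)^{(a,b)(c,d)}_{(a',b')(c',d')} = S^{ac}_{a'c'} R^{bd}_{b'd'}`. -/
def boxTimes {ι κ : Type*} (S : Matrix (ι × ι) (ι × ι) ℂ) (R : Matrix (κ × κ) (κ × κ) ℂ) :
    Matrix ((ι × κ) × (ι × κ)) ((ι × κ) × (ι × κ)) ℂ :=
  Matrix.of fun x y => S (x.1.1, x.2.1) (y.1.1, y.2.1) * R (x.1.2, x.2.2) (y.1.2, y.2.2)

open Kronecker

def e2 {ι κ : Type*} : ((ι × κ) × (ι × κ)) ≃ ((ι × ι) × (κ × κ)) where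
  toFun x := ((x.1.1, x.2.1), (x.1.2, x.2.2))
  invFun p := ((p.1.1, p.2.1), (p.1.2, p.2.2))
  left_inv _ := rfl
  right_inv _ := rfl

def e3 {ι κ : Type*} : ((ι × κ) × (ι × κ) × (ι × κ)) ≃ ((ι × ι × ι) × (κ × κ × κ)) where
  toFun x := ((x.1.1, x.2.1.1, x.2.2.1), (x.1.2, x.2.1.2, x.2.2.2))
  invFun p := ((p.1.1, p.2.1), ((p.1.2.1, p.2.2.1), (p.1.2.2, p.2.2.2)))
  left_inv _ := rfl
  right_inv _ := rfl

lemma ite_prod {α β : Type*} [DecidableEq α] [DecidableEq β] (a c : α) (b d : β) :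
    (if (a, b) = (c, d) then (1 : ℂ) else 0)
      = (if a = c then (1 : ℂ) else 0) * (if b = d then 1 else 0) := by
  by_cases h1 : a = c <;> by_cases h2 : b = d <;> simp [h1, h2, Prod.ext_iff]

lemma box_eq {ι κ : Type*} (S : Matrix (ι × ι) (ι × ι) ℂ) (R : Matrix (κ × κ) (κ × κ) ℂ) :
    boxTimes S R = (S ⊗ₖ R).submatrix e2 e2 := by
  ext x y
  rfl

lemma S12_box {ι κ : Type*} [DecidableEq ι] [DecidableEq κ]
    (S : Matrix (ι × ι) (ι × ι) ℂ) (R : Matrix (κ × κ) (κ × κ) ℂ) :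
    S12 (boxTimes S R) = ((S12 S) ⊗ₖ (S12 R)).submatrix e3 e3 := by
  ext x y
  simp only [S12, boxTimes, Matrix.submatrix_apply, Matrix.kroneckerMap_apply,
    Matrix.of_apply, e3, Equiv.coe_fn_mk]
  rw [ite_prod]
  ring

lemma S23_box {ι κ : Type*} [DecidableEq ι] [DecidableEq κ]
    (S : Matrix (ι × ι) (ι × ι) ℂ) (R : Matrix (κ × κ) (κ × κ) ℂ) :
    S23 (boxTimes S R) = ((S23 S) ⊗ₖ (S23 R)).submatrix e3 e3 := by
  ext x y
  simp only [S23, boxTimes, Matrix.submatrix_apply, Matrix.kroneckerMap_apply,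
    Matrix.of_apply, e3, Equiv.coe_fn_mk]
  rw [ite_prod]
  ring

/-- the box-product of two involutive R-matrices is a unitary involutive
solution of the Yang-Baxter equation on `(H ⊗ K) ⊗ (H ⊗ K)`. -/
theorem statement3 {ι κ : Type*} [Fintype ι] [DecidableEq ι] [Fintype κ] [DecidableEq κ]
    (S : Matrix (ι × ι) (ι × ι) ℂ) (R : Matrix (κ × κ) (κ × κ) ℂ)
    (hS : IsRMatrix S) (hR : IsRMatrix R) : IsRMatrix (boxTimes S R) := by
  obtain ⟨hS1, hS2, hS3⟩ := hS
  obtain ⟨hR1, hR2, hR3⟩ := hR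
  refine ⟨?_, ?_, ?_⟩
  · ext x y
    have h1 : star (S (y.1.1, y.2.1) (x.1.1, x.2.1)) = S (x.1.1, x.2.1) (y.1.1, y.2.1) :=
      congrFun (congrFun hS1 (x.1.1, x.2.1)) (y.1.1, y.2.1)
    have h2 : star (R (y.1.2, y.2.2) (x.1.2, x.2.2)) = R (x.1.2, x.2.2) (y.1.2, y.2.2) :=
      congrFun (congrFun hR1 (x.1.2, x.2.2)) (y.1.2, y.2.2)
    simp only [boxTimes, conjTranspose_apply, of_apply, star_mul']
    rw [h1, h2, mul_comm]
  · rw [box_eq, Matrix.submatrix_mul_equiv, ← Matrix.mul_kronecker_mul, hS2, hR2,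
      Matrix.one_kronecker_one, Matrix.submatrix_one_equiv]
  · unfold YangBaxter
    rw [S12_box, S23_box, Matrix.submatrix_mul_equiv, Matrix.submatrix_mul_equiv,
      Matrix.submatrix_mul_equiv, Matrix.submatrix_mul_equiv,
      ← Matrix.mul_kronecker_mul, ← Matrix.mul_kronecker_mul,
      ← Matrix.mul_kronecker_mul, ← Matrix.mul_kronecker_mul, hS3, hR3]
end

section
/- Let S ∈ R₀(H), R ∈ R₀(K) be involutive R-matrices and F the tensor flip on L⊗L for a Hilbert space L. Then under the natural identification ((H⊕K)⊗L)^{⊗2} ≅ ((H⊗L) ⊕ (K⊗L))^{⊗2}, one has the distributivity identity (S ⊞ R) ⊠ F = (S ⊠ F) ⊞ (R ⊠ F). -/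
open Matrix

/-- The tensor flip `F` on `L ⊗ L`, as a matrix. -/
def flipMat (L : Type*) [DecidableEq L] : Matrix (L × L) (L × L) ℂ :=
  Matrix.of fun x y => if x.1 = y.2 ∧ x.2 = y.1 then 1 else 0

/-- distributivity `(S ⊞ R) ⊠ F = (S ⊠ F) ⊞ (R ⊠ F)` under the natural
identification `((H ⊕ K) ⊗ L)^{⊗2} ≅ ((H ⊗ L) ⊕ (K ⊗ L))^{⊗2}`. -/
theorem statement4 {ι κ L : Type*} [Fintype ι] [DecidableEq ι] [Fintype κ] [DecidableEq κ]
    [DecidableEq L]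
    (S : Matrix (ι × ι) (ι × ι) ℂ) (R : Matrix (κ × κ) (κ × κ) ℂ)
    (hS : IsRMatrix S) (hR : IsRMatrix R) :
    boxTimes (boxSum S R) (flipMat L) =
      (boxSum (boxTimes S (flipMat L)) (boxTimes R (flipMat L))).submatrix
        (Prod.map (Equiv.sumProdDistrib ι κ L) (Equiv.sumProdDistrib ι κ L))
        (Prod.map (Equiv.sumProdDistrib ι κ L) (Equiv.sumProdDistrib ι κ L)) := by
  ext ⟨⟨a, l1⟩, ⟨b, l2⟩⟩ ⟨⟨c, l3⟩, ⟨d, l4⟩⟩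
  rcases a with a | a <;> rcases b with b | b <;> rcases c with c | c <;> rcases d with d | d <;>
    simp only [Matrix.submatrix_apply, Prod.map_apply, Equiv.sumProdDistrib_apply_left,
      Equiv.sumProdDistrib_apply_right, boxTimes, boxSum, flipMat, Matrix.of_apply] <;>
    simp [ite_and] <;> aesop
end

section
/- For involutive R-matrices S on H and R on K, the representation D_n^{S⊠R} of the symmetric group S_n on (H⊗K)^{⊗n} generated by S⊠R is unitarily equivalent (via the unitary U_n rearranging (H⊗K)^{⊗n} ≅ H^{⊗n}⊗K^{⊗n}) to the tensor product representation D_n^S ⊗ D_n^R, for every n. -/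
open Matrix Kronecker

/-- `S` acting on the `i`-th and `(i+1)`-st tensor slots of `H^{⊗ n}`. -/
def adjOp {ι : Type*} [Fintype ι] [DecidableEq ι] (S : Matrix (ι × ι) (ι × ι) ℂ)
    (n i : ℕ) (h : i + 1 < n) : Matrix (Fin n → ι) (Fin n → ι) ℂ :=
  Matrix.of fun f g =>
    S (f ⟨i, Nat.lt_of_succ_lt h⟩, f ⟨i + 1, h⟩) (g ⟨i, Nat.lt_of_succ_lt h⟩, g ⟨i + 1, h⟩) *
      ∏ j : Fin n, if j.1 = i ∨ j.1 = i + 1 then 1 else if f j = g j then 1 else 0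

/-- The rearrangement `U_n : (H ⊗ K)^{⊗ n} → H^{⊗ n} ⊗ K^{⊗ n}` on basis labels. -/
def rearr {ι κ : Type*} (n : ℕ) (x : Fin n → ι × κ) : (Fin n → ι) × (Fin n → κ) :=
  (fun j => (x j).1, fun j => (x j).2)


theorem key_adjOp {ι κ : Type*} [Fintype ι] [DecidableEq ι] [Fintype κ] [DecidableEq κ]
    (S : Matrix (ι × ι) (ι × ι) ℂ) (R : Matrix (κ × κ) (κ × κ) ℂ)
    (n i : ℕ) (h : i + 1 < n) :
    adjOp (boxTimes S R) n i h =
      ((adjOp S n i h) ⊗ₖ (adjOp R n i h)).submatrix (rearr n) (rearr n) := by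
  ext f g
  simp only [adjOp, boxTimes, Matrix.submatrix_apply, Matrix.kroneckerMap_apply,
    Matrix.of_apply, rearr]
  rw [mul_mul_mul_comm, ← Finset.prod_mul_distrib]
  congr 1
  apply Finset.prod_congr rfl
  intro j _
  by_cases hj : j.1 = i ∨ j.1 = i + 1
  · simp [hj]
  · simp only [hj, if_false]
    by_cases h1 : (f j).1 = (g j).1 <;> by_cases h2 : (f j).2 = (g j).2 <;>
      simp [Prod.ext_iff, h1, h2]

/-- the representation `D_n^{S ⊠ R}` of `S_n` on `(H ⊗ K)^{⊗ n}` is unitarily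
equivalent, via the rearrangement unitary `U_n`, to the tensor (Kronecker) product
representation `D_n^S ⊗ D_n^R`. -/
theorem statement5 {ι κ : Type*} [Fintype ι] [DecidableEq ι] [Fintype κ] [DecidableEq κ]
    (S : Matrix (ι × ι) (ι × ι) ℂ) (R : Matrix (κ × κ) (κ × κ) ℂ)
    (hS : IsRMatrix S) (hR : IsRMatrix R) (n : ℕ)
    (DS : Equiv.Perm (Fin n) →* Matrix.unitaryGroup (Fin n → ι) ℂ)
    (DR : Equiv.Perm (Fin n) →* Matrix.unitaryGroup (Fin n → κ) ℂ)
    (DSR : Equiv.Perm (Fin n) →* Matrix.unitaryGroup (Fin n → ι × κ) ℂ)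
    (hDS : ∀ (i : ℕ) (h : i + 1 < n),
      (DS (Equiv.swap ⟨i, Nat.lt_of_succ_lt h⟩ ⟨i + 1, h⟩) : Matrix _ _ ℂ) = adjOp S n i h)
    (hDR : ∀ (i : ℕ) (h : i + 1 < n),
      (DR (Equiv.swap ⟨i, Nat.lt_of_succ_lt h⟩ ⟨i + 1, h⟩) : Matrix _ _ ℂ) = adjOp R n i h)
    (hDSR : ∀ (i : ℕ) (h : i + 1 < n),
      (DSR (Equiv.swap ⟨i, Nat.lt_of_succ_lt h⟩ ⟨i + 1, h⟩) : Matrix _ _ ℂ) =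
        adjOp (boxTimes S R) n i h) :
    ∀ π : Equiv.Perm (Fin n),
      (DSR π : Matrix (Fin n → ι × κ) (Fin n → ι × κ) ℂ) =
        (((DS π : Matrix _ _ ℂ) ⊗ₖ (DR π : Matrix _ _ ℂ)).submatrix (rearr n) (rearr n)) := by
  have mult : ∀ π σ : Equiv.Perm (Fin n),
      (DSR π : Matrix (Fin n → ι × κ) (Fin n → ι × κ) ℂ) =
        (((DS π : Matrix _ _ ℂ) ⊗ₖ (DR π : Matrix _ _ ℂ)).submatrix (rearr n) (rearr n)) →
      (DSR σ : Matrix (Fin n → ι × κ) (Fin n → ι × κ) ℂ) =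
        (((DS σ : Matrix _ _ ℂ) ⊗ₖ (DR σ : Matrix _ _ ℂ)).submatrix (rearr n) (rearr n)) →
      (DSR (π * σ) : Matrix (Fin n → ι × κ) (Fin n → ι × κ) ℂ) =
        (((DS (π * σ) : Matrix _ _ ℂ) ⊗ₖ (DR (π * σ) : Matrix _ _ ℂ)).submatrix
          (rearr n) (rearr n)) := by
    intro π σ hπ hσ
    have he : rearr (ι := ι) (κ := κ) n =
        ⇑(Equiv.arrowProdEquivProdArrow (Fin n) (fun _ => ι) (fun _ => κ)) := rfl
    simp only [_root_.map_mul, MulMemClass.coe_mul, hπ, hσ, he,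
      Matrix.submatrix_mul_equiv, Matrix.mul_kronecker_mul]
  have one_eq : (DSR 1 : Matrix (Fin n → ι × κ) (Fin n → ι × κ) ℂ) =
      (((DS 1 : Matrix _ _ ℂ) ⊗ₖ (DR 1 : Matrix _ _ ℂ)).submatrix (rearr n) (rearr n)) := by
    have he : rearr (ι := ι) (κ := κ) n =
        ⇑(Equiv.arrowProdEquivProdArrow (Fin n) (fun _ => ι) (fun _ => κ)) := rfl
    simp only [_root_.map_one, OneMemClass.coe_one, Matrix.one_kronecker_one, he,
      Matrix.submatrix_one_equiv]
  intro π
  match n, DS, DR, DSR, hDS, hDR, hDSR, π with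
  | 0, DS, DR, DSR, hDS, hDR, hDSR, π =>
    have : π = 1 := Subsingleton.elim _ _
    subst this
    exact one_eq
  | (m + 1), DS, DR, DSR, hDS, hDR, hDSR, π =>
    have hmem : π ∈ Submonoid.closure
        (Set.range fun i : Fin m ↦ Equiv.swap i.castSucc i.succ) := by
      rw [Equiv.Perm.mclosure_swap_castSucc_succ]; trivial
    induction hmem using Submonoid.closure_induction with
    | mem x hx =>
      obtain ⟨i, rfl⟩ := hx
      have hi : (i : ℕ) + 1 < m + 1 := Nat.succ_lt_succ i.isLt
      have hc : i.castSucc = (⟨(i : ℕ), Nat.lt_of_succ_lt hi⟩ : Fin (m + 1)) := rfl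
      have hs : i.succ = (⟨(i : ℕ) + 1, hi⟩ : Fin (m + 1)) := rfl
      simp only [hc, hs, hDSR _ hi, hDS _ hi, hDR _ hi]
      exact key_adjOp S R (m + 1) i hi
    | one => exact one_eq
    | mul x y _ _ hx hy => exact mult x y hx hy
end

section
/- If Y_n^{S₁,S₂} intertwines the symmetric group representations D_n^{S₁} and D_n^{S₂} (i.e. Y_n D_n^{S₁}(π) = D_n^{S₂}(π) Y_n for all π ∈ S_n) and Y_n^{R₁,R₂} intertwines D_n^{R₁} and D_n^{R₂}, then U_n* (Y_n^{S₁,S₂} ⊗ Y_n^{R₁,R₂}) U_n is a unitary intertwiner between D_n^{S₁⊠R₁} and D_n^{S₂⊠R₂}. -/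
open Matrix Kronecker

section Aux

open Matrix Kronecker

variable {ι κ ι' κ' : Type*}

def rearrEquiv (ι κ : Type*) (n : ℕ) : (Fin n → ι × κ) ≃ (Fin n → ι) × (Fin n → κ) where
  toFun := rearr n
  invFun p := fun j => (p.1 j, p.2 j)
  left_inv f := by funext j; rfl
  right_inv p := rfl

lemma kronecker_conjTranspose (A : Matrix ι ι' ℂ) (B : Matrix κ κ' ℂ) :
    (A ⊗ₖ B)ᴴ = Aᴴ ⊗ₖ Bᴴ := by
  ext x y
  simp [Matrix.conjTranspose_apply, Matrix.kroneckerMap_apply, mul_comm]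

lemma adjOp_box [Fintype ι] [DecidableEq ι] [Fintype κ] [DecidableEq κ]
    (S : Matrix (ι × ι) (ι × ι) ℂ) (R : Matrix (κ × κ) (κ × κ) ℂ) (n i : ℕ) (h : i + 1 < n) :
    adjOp (boxTimes S R) n i h =
      (adjOp S n i h ⊗ₖ adjOp R n i h).submatrix (rearr n) (rearr n) := by
  ext f g
  simp only [adjOp, boxTimes, Matrix.submatrix_apply, Matrix.kroneckerMap_apply, rearr,
    Matrix.of_apply]
  have key : ∀ j : Fin n,
      (if j.1 = i ∨ j.1 = i + 1 then 1 else if f j = g j then (1 : ℂ) else 0) =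
        (if j.1 = i ∨ j.1 = i + 1 then 1 else if (f j).1 = (g j).1 then (1 : ℂ) else 0) *
        (if j.1 = i ∨ j.1 = i + 1 then 1 else if (f j).2 = (g j).2 then (1 : ℂ) else 0) := by
    intro j
    by_cases hj : j.1 = i ∨ j.1 = i + 1
    · simp [hj]
    · simp only [hj, if_false]
      by_cases h1 : (f j).1 = (g j).1 <;> by_cases h2 : (f j).2 = (g j).2 <;>
        simp [Prod.ext_iff, h1, h2]
  rw [Finset.prod_congr rfl (fun j _ => key j), Finset.prod_mul_distrib]
  ring

end Aux

/-- if `Y_n^{S₁,S₂}` is a unitary intertwiner between `D_n^{S₁}` and `D_n^{S₂}`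
and `Y_n^{R₁,R₂}` between `D_n^{R₁}` and `D_n^{R₂}`, then `U_n* (Y_n^{S₁,S₂} ⊗ Y_n^{R₁,R₂}) U_n`
is a unitary intertwiner between `D_n^{S₁ ⊠ R₁}` and `D_n^{S₂ ⊠ R₂}`. -/
theorem statement6 {ι₁ ι₂ κ₁ κ₂ : Type*}
    [Fintype ι₁] [DecidableEq ι₁] [Fintype ι₂] [DecidableEq ι₂]
    [Fintype κ₁] [DecidableEq κ₁] [Fintype κ₂] [DecidableEq κ₂]
    (S₁ : Matrix (ι₁ × ι₁) (ι₁ × ι₁) ℂ) (S₂ : Matrix (ι₂ × ι₂) (ι₂ × ι₂) ℂ)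
    (R₁ : Matrix (κ₁ × κ₁) (κ₁ × κ₁) ℂ) (R₂ : Matrix (κ₂ × κ₂) (κ₂ × κ₂) ℂ)
    (hS₁ : IsRMatrix S₁) (hS₂ : IsRMatrix S₂) (hR₁ : IsRMatrix R₁) (hR₂ : IsRMatrix R₂)
    (n : ℕ)
    (DS₁ : Equiv.Perm (Fin n) →* Matrix.unitaryGroup (Fin n → ι₁) ℂ)
    (DS₂ : Equiv.Perm (Fin n) →* Matrix.unitaryGroup (Fin n → ι₂) ℂ)
    (DR₁ : Equiv.Perm (Fin n) →* Matrix.unitaryGroup (Fin n → κ₁) ℂ)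
    (DR₂ : Equiv.Perm (Fin n) →* Matrix.unitaryGroup (Fin n → κ₂) ℂ)
    (DSR₁ : Equiv.Perm (Fin n) →* Matrix.unitaryGroup (Fin n → ι₁ × κ₁) ℂ)
    (DSR₂ : Equiv.Perm (Fin n) →* Matrix.unitaryGroup (Fin n → ι₂ × κ₂) ℂ)
    (hDS₁ : ∀ (i : ℕ) (h : i + 1 < n),
      (DS₁ (Equiv.swap ⟨i, Nat.lt_of_succ_lt h⟩ ⟨i + 1, h⟩) : Matrix _ _ ℂ) = adjOp S₁ n i h)
    (hDS₂ : ∀ (i : ℕ) (h : i + 1 < n),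
      (DS₂ (Equiv.swap ⟨i, Nat.lt_of_succ_lt h⟩ ⟨i + 1, h⟩) : Matrix _ _ ℂ) = adjOp S₂ n i h)
    (hDR₁ : ∀ (i : ℕ) (h : i + 1 < n),
      (DR₁ (Equiv.swap ⟨i, Nat.lt_of_succ_lt h⟩ ⟨i + 1, h⟩) : Matrix _ _ ℂ) = adjOp R₁ n i h)
    (hDR₂ : ∀ (i : ℕ) (h : i + 1 < n),
      (DR₂ (Equiv.swap ⟨i, Nat.lt_of_succ_lt h⟩ ⟨i + 1, h⟩) : Matrix _ _ ℂ) = adjOp R₂ n i h)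
    (hDSR₁ : ∀ (i : ℕ) (h : i + 1 < n),
      (DSR₁ (Equiv.swap ⟨i, Nat.lt_of_succ_lt h⟩ ⟨i + 1, h⟩) : Matrix _ _ ℂ) =
        adjOp (boxTimes S₁ R₁) n i h)
    (hDSR₂ : ∀ (i : ℕ) (h : i + 1 < n),
      (DSR₂ (Equiv.swap ⟨i, Nat.lt_of_succ_lt h⟩ ⟨i + 1, h⟩) : Matrix _ _ ℂ) =
        adjOp (boxTimes S₂ R₂) n i h)
    (YS : Matrix (Fin n → ι₂) (Fin n → ι₁) ℂ) (YR : Matrix (Fin n → κ₂) (Fin n → κ₁) ℂ)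
    (hYSunit : YSᴴ * YS = 1 ∧ YS * YSᴴ = 1) (hYRunit : YRᴴ * YR = 1 ∧ YR * YRᴴ = 1)
    (hYS : ∀ π : Equiv.Perm (Fin n), YS * (DS₁ π : Matrix _ _ ℂ) = (DS₂ π : Matrix _ _ ℂ) * YS)
    (hYR : ∀ π : Equiv.Perm (Fin n), YR * (DR₁ π : Matrix _ _ ℂ) = (DR₂ π : Matrix _ _ ℂ) * YR) :
    ∀ Z : Matrix (Fin n → ι₂ × κ₂) (Fin n → ι₁ × κ₁) ℂ,
      Z = (YS ⊗ₖ YR).submatrix (rearr n) (rearr n) →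
      (Zᴴ * Z = 1 ∧ Z * Zᴴ = 1) ∧
        ∀ π : Equiv.Perm (Fin n),
          Z * (DSR₁ π : Matrix _ _ ℂ) = (DSR₂ π : Matrix _ _ ℂ) * Z := by
  intro Z hZ
  have hre1 : (rearr n : (Fin n → ι₁ × κ₁) → _) = ⇑(rearrEquiv ι₁ κ₁ n) := rfl
  have hre2 : (rearr n : (Fin n → ι₂ × κ₂) → _) = ⇑(rearrEquiv ι₂ κ₂ n) := rfl
  subst hZ
  constructor
  · constructor
    · rw [Matrix.conjTranspose_submatrix, kronecker_conjTranspose, hre2,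
        Matrix.submatrix_mul_equiv, ← Matrix.mul_kronecker_mul, hYSunit.1, hYRunit.1,
        Matrix.one_kronecker_one, hre1, Matrix.submatrix_one_equiv]
    · rw [Matrix.conjTranspose_submatrix, kronecker_conjTranspose, hre1,
        Matrix.submatrix_mul_equiv, ← Matrix.mul_kronecker_mul, hYSunit.2, hYRunit.2,
        Matrix.one_kronecker_one, hre2, Matrix.submatrix_one_equiv]
  · -- intertwining: first prove it for adjacent transpositions
    have hadj : ∀ (i : ℕ) (h : i + 1 < n),
        (YS ⊗ₖ YR).submatrix (rearr n) (rearr n) *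
            (DSR₁ (Equiv.swap ⟨i, Nat.lt_of_succ_lt h⟩ ⟨i + 1, h⟩) : Matrix _ _ ℂ) =
          (DSR₂ (Equiv.swap ⟨i, Nat.lt_of_succ_lt h⟩ ⟨i + 1, h⟩) : Matrix _ _ ℂ) *
            (YS ⊗ₖ YR).submatrix (rearr n) (rearr n) := by
      intro i h
      rw [hDSR₁ i h, hDSR₂ i h, adjOp_box, adjOp_box, hre1, hre2]
      erw [Matrix.submatrix_mul_equiv, Matrix.submatrix_mul_equiv,
        ← Matrix.mul_kronecker_mul, ← Matrix.mul_kronecker_mul,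
        ← hDS₁ i h, ← hDR₁ i h, ← hDS₂ i h, ← hDR₂ i h, hYS, hYR]
      rfl
    -- the set of permutations for which the intertwining holds is a submonoid
    set Z := (YS ⊗ₖ YR).submatrix (rearr n) (rearr n) with hZdef
    have hsub : ∀ π ∈ Submonoid.closure
        {σ : Equiv.Perm (Fin n) | ∃ (i : ℕ) (h : i + 1 < n),
          σ = Equiv.swap ⟨i, Nat.lt_of_succ_lt h⟩ ⟨i + 1, h⟩},
        Z * (DSR₁ π : Matrix _ _ ℂ) = (DSR₂ π : Matrix _ _ ℂ) * Z := by
      intro π hπ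
      induction hπ using Submonoid.closure_induction with
      | mem σ hσ => obtain ⟨i, h, rfl⟩ := hσ; exact hadj i h
      | one => simp; exact (Matrix.mul_one Z).trans (Matrix.one_mul Z).symm
      | mul σ τ _ _ hσ hτ =>
        rw [_root_.map_mul, _root_.map_mul,
          Matrix.UnitaryGroup.mul_val, Matrix.UnitaryGroup.mul_val]
        erw [← Matrix.mul_assoc, hσ, Matrix.mul_assoc, hτ, Matrix.mul_assoc]
        rfl
    intro π
    apply hsub
    match n, π with
    | 0, π =>
      have : π = 1 := Subsingleton.elim _ _
      simp [this]
    | (m + 1), π =>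
      have htop := Equiv.Perm.mclosure_swap_castSucc_succ m
      have hle : Submonoid.closure (Set.range fun i : Fin m =>
            Equiv.swap i.castSucc i.succ) ≤
          Submonoid.closure {σ : Equiv.Perm (Fin (m + 1)) | ∃ (i : ℕ) (h : i + 1 < m + 1),
            σ = Equiv.swap ⟨i, Nat.lt_of_succ_lt h⟩ ⟨i + 1, h⟩} := by
        apply Submonoid.closure_le.2
        rintro _ ⟨i, rfl⟩
        apply Submonoid.subset_closure
        exact ⟨i.1, Nat.succ_lt_succ i.2, by congr 1⟩
      exact hle (htop ▸ Submonoid.mem_top π)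
end

section
/- If Q is a unitary on H commuting with S in the sense [S, Q⊗Q] = 0, and R := (1⊗Q) S (1⊗Q*), then R is an involutive R-matrix and Y_n := 1 ⊗ Q ⊗ Q² ⊗ ⋯ ⊗ Q^{n-1} satisfies Y_n D_n^S(π) = D_n^R(π) Y_n for all π ∈ S_n. -/
open Matrix Kronecker

/-- `Y_n = 1 ⊗ Q ⊗ Q² ⊗ ⋯ ⊗ Q^{n-1}` as a matrix on `H^{⊗ n}`. -/
def powerTensor {ι : Type*} [Fintype ι] [DecidableEq ι] (Q : Matrix ι ι ℂ) (n : ℕ) :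
    Matrix (Fin n → ι) (Fin n → ι) ℂ :=
  Matrix.of fun f g => ∏ j : Fin n, (Q ^ (j : ℕ)) (f j) (g j)


def tens {ι : Type*} [Fintype ι] {n : ℕ} (M : Fin n → Matrix ι ι ℂ) :
    Matrix (Fin n → ι) (Fin n → ι) ℂ :=
  Matrix.of fun f g => ∏ j, M j (f j) (g j)

section Aux
variable {ι : Type*} [Fintype ι] [DecidableEq ι]

lemma tens_mul_adjOp {n : ℕ} (i : ℕ) (h : i + 1 < n) (M : Fin n → Matrix ι ι ℂ)
    (A : Matrix (ι × ι) (ι × ι) ℂ) :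
    tens M * adjOp A n i h = Matrix.of fun f g =>
      ((M ⟨i, Nat.lt_of_succ_lt h⟩ ⊗ₖ M ⟨i + 1, h⟩) * A)
        (f ⟨i, Nat.lt_of_succ_lt h⟩, f ⟨i + 1, h⟩)
          (g ⟨i, Nat.lt_of_succ_lt h⟩, g ⟨i + 1, h⟩) *
      ∏ j : Fin n, (if j.1 = i ∨ j.1 = i + 1 then 1 else M j (f j) (g j)) := by
  set ii : Fin n := ⟨i, Nat.lt_of_succ_lt h⟩ with hii
  set i1 : Fin n := ⟨i + 1, h⟩ with hi1
  have hne : ii ≠ i1 := by simp [hii, hi1, Fin.ext_iff]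
  ext f g
  rw [mul_apply]
  simp only [tens, adjOp, of_apply]
  set q : ι × ι := (g ii, g i1) with hq
  -- the "off-site" product
  set C : ℂ := ∏ j : Fin n, (if j.1 = i ∨ j.1 = i + 1 then 1 else M j (f j) (g j)) with hC
  -- per-coordinate factor
  set F : ι × ι → Fin n → ι → ℂ := fun p j x =>
    M j (f j) x * (if j.1 = i ∨ j.1 = i + 1 then 1 else if x = g j then 1 else 0)
      * (if j = ii then (if x = p.1 then (1:ℂ) else 0) else 1)
      * (if j = i1 then (if x = p.2 then (1:ℂ) else 0) else 1) with hF
  have hterm : ∀ k : Fin n → ι,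
      (∏ j, M j (f j) (k j)) *
        (A (k ii, k i1) q * ∏ j : Fin n, (if j.1 = i ∨ j.1 = i + 1 then 1
          else if k j = g j then 1 else 0))
      = ∑ p : ι × ι, A p q * ∏ j, F p j (k j) := by
    intro k
    have hsplit : ∀ p : ι × ι, (∏ j, F p j (k j)) =
        ((∏ j, M j (f j) (k j) * (if j.1 = i ∨ j.1 = i + 1 then 1
            else if k j = g j then 1 else 0))
          * (if k ii = p.1 then 1 else 0)) * (if k i1 = p.2 then 1 else 0) := by
      intro p
      rw [hF]
      simp only [Finset.prod_mul_distrib]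
      congr 1
      · congr 1
        rw [Finset.prod_ite_eq' Finset.univ ii (fun j => if k j = p.1 then (1:ℂ) else 0)]
        simp
      · rw [Finset.prod_ite_eq' Finset.univ i1 (fun j => if k j = p.2 then (1:ℂ) else 0)]
        simp
    simp only [hsplit]
    rw [Fintype.sum_prod_type]
    simp only [mul_ite, mul_one, mul_zero, ite_mul, zero_mul, one_mul,
      Finset.sum_ite_eq, Finset.mem_univ, if_true]
    trans A (k ii, k i1) q * ((∏ j, M j (f j) (k j)) *
      ∏ j : Fin n, (if j.1 = i ∨ j.1 = i + 1 then (1:ℂ) else if k j = g j then 1 else 0))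
    · ring
    · congr 1
      rw [← Finset.prod_mul_distrib]
      refine Finset.prod_congr rfl fun j _ => ?_
      split_ifs <;> ring
  rw [Finset.sum_congr rfl fun k _ => hterm k, Finset.sum_comm]
  have hval : ∀ p : ι × ι, ∀ j : Fin n, (∑ x : ι, F p j x) =
      (if j = ii then M ii (f ii) p.1 else 1) * (if j = i1 then M i1 (f i1) p.2 else 1)
        * (if j.1 = i ∨ j.1 = i + 1 then 1 else M j (f j) (g j)) := by
    intro p j
    by_cases hj1 : j = ii
    · subst hj1
      simp only [hF, if_pos rfl, if_neg hne, hii]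
      simp [Finset.sum_ite_eq', mul_ite, hi1]
    · by_cases hj2 : j = i1
      · subst hj2
        simp only [hF, if_pos rfl, if_neg (Ne.symm hne)]
        simp [Finset.sum_ite_eq', mul_ite, hi1]
      · have hc : ¬ (j.1 = i ∨ j.1 = i + 1) := by
          rintro (hc | hc)
          · exact hj1 (Fin.ext hc)
          · exact hj2 (Fin.ext hc)
        simp only [hF, if_neg hj1, if_neg hj2, if_neg hc]
        simp [Finset.sum_ite_eq', mul_ite]
  have hprod : ∀ p : ι × ι, (∏ j, ∑ x : ι, F p j x)
      = M ii (f ii) p.1 * M i1 (f i1) p.2 * C := by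
    intro p
    simp only [hval, Finset.prod_mul_distrib]
    rw [Finset.prod_ite_eq' Finset.univ ii (fun j => M ii (f ii) p.1),
      Finset.prod_ite_eq' Finset.univ i1 (fun j => M i1 (f i1) p.2)]
    simp [hC]
  calc ∑ p : ι × ι, ∑ k : Fin n → ι, A p q * ∏ j, F p j (k j)
      = ∑ p : ι × ι, A p q * (M ii (f ii) p.1 * M i1 (f i1) p.2 * C) := by
        refine Finset.sum_congr rfl fun p _ => ?_
        rw [← Finset.mul_sum, ← Fintype.prod_sum (fun j x => F p j x), hprod p]
    _ = (((M ii ⊗ₖ M i1) * A) (f ii, f i1) q) * C := by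
        rw [mul_apply, Finset.sum_mul]
        refine Finset.sum_congr rfl fun p _ => ?_
        simp only [kroneckerMap_apply]
        ring

lemma adjOp_mul_tens {n : ℕ} (i : ℕ) (h : i + 1 < n) (M : Fin n → Matrix ι ι ℂ)
    (B : Matrix (ι × ι) (ι × ι) ℂ) :
    adjOp B n i h * tens M = Matrix.of fun f g =>
      (B * (M ⟨i, Nat.lt_of_succ_lt h⟩ ⊗ₖ M ⟨i + 1, h⟩))
        (f ⟨i, Nat.lt_of_succ_lt h⟩, f ⟨i + 1, h⟩)
          (g ⟨i, Nat.lt_of_succ_lt h⟩, g ⟨i + 1, h⟩) *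
      ∏ j : Fin n, (if j.1 = i ∨ j.1 = i + 1 then 1 else M j (f j) (g j)) := by
  set ii : Fin n := ⟨i, Nat.lt_of_succ_lt h⟩ with hii
  set i1 : Fin n := ⟨i + 1, h⟩ with hi1
  have hne : ii ≠ i1 := by simp [hii, hi1, Fin.ext_iff]
  ext f g
  rw [mul_apply]
  simp only [tens, adjOp, of_apply]
  set q : ι × ι := (f ii, f i1) with hq
  set C : ℂ := ∏ j : Fin n, (if j.1 = i ∨ j.1 = i + 1 then 1 else M j (f j) (g j)) with hC
  set F : ι × ι → Fin n → ι → ℂ := fun p j x =>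
    M j x (g j) * (if j.1 = i ∨ j.1 = i + 1 then 1 else if f j = x then 1 else 0)
      * (if j = ii then (if x = p.1 then (1:ℂ) else 0) else 1)
      * (if j = i1 then (if x = p.2 then (1:ℂ) else 0) else 1) with hF
  have hterm : ∀ k : Fin n → ι,
      (B q (k ii, k i1) * ∏ j : Fin n, (if j.1 = i ∨ j.1 = i + 1 then 1
          else if f j = k j then 1 else 0)) * (∏ j, M j (k j) (g j))
      = ∑ p : ι × ι, B q p * ∏ j, F p j (k j) := by
    intro k
    have hsplit : ∀ p : ι × ι, (∏ j, F p j (k j)) =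
        ((∏ j, M j (k j) (g j) * (if j.1 = i ∨ j.1 = i + 1 then 1
            else if f j = k j then 1 else 0))
          * (if k ii = p.1 then 1 else 0)) * (if k i1 = p.2 then 1 else 0) := by
      intro p
      rw [hF]
      simp only [Finset.prod_mul_distrib]
      congr 1
      · congr 1
        rw [Finset.prod_ite_eq' Finset.univ ii (fun j => if k j = p.1 then (1:ℂ) else 0)]
        simp
      · rw [Finset.prod_ite_eq' Finset.univ i1 (fun j => if k j = p.2 then (1:ℂ) else 0)]
        simp
    simp only [hsplit]
    rw [Fintype.sum_prod_type]
    simp only [mul_ite, mul_one, mul_zero, ite_mul, zero_mul, one_mul,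
      Finset.sum_ite_eq, Finset.mem_univ, if_true]
    trans B q (k ii, k i1) * ((∏ j, M j (k j) (g j)) *
      ∏ j : Fin n, (if j.1 = i ∨ j.1 = i + 1 then (1:ℂ) else if f j = k j then 1 else 0))
    · ring
    · congr 1
      rw [← Finset.prod_mul_distrib]
      refine Finset.prod_congr rfl fun j _ => ?_
      split_ifs <;> ring
  rw [Finset.sum_congr rfl fun k _ => hterm k, Finset.sum_comm]
  have hval : ∀ p : ι × ι, ∀ j : Fin n, (∑ x : ι, F p j x) =
      (if j = ii then M ii p.1 (g ii) else 1) * (if j = i1 then M i1 p.2 (g i1) else 1)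
        * (if j.1 = i ∨ j.1 = i + 1 then 1 else M j (f j) (g j)) := by
    intro p j
    by_cases hj1 : j = ii
    · subst hj1
      simp only [hF, if_pos rfl, if_neg hne, hii]
      simp [Finset.sum_ite_eq', mul_ite, hi1]
    · by_cases hj2 : j = i1
      · subst hj2
        simp only [hF, if_pos rfl, if_neg (Ne.symm hne)]
        simp [Finset.sum_ite_eq', mul_ite, hi1]
      · have hc : ¬ (j.1 = i ∨ j.1 = i + 1) := by
          rintro (hc | hc)
          · exact hj1 (Fin.ext hc)
          · exact hj2 (Fin.ext hc)
        simp only [hF, if_neg hj1, if_neg hj2, if_neg hc]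
        simp [Finset.sum_ite_eq, mul_ite]
  have hprod : ∀ p : ι × ι, (∏ j, ∑ x : ι, F p j x)
      = M ii p.1 (g ii) * M i1 p.2 (g i1) * C := by
    intro p
    simp only [hval, Finset.prod_mul_distrib]
    rw [Finset.prod_ite_eq' Finset.univ ii (fun j => M ii p.1 (g ii)),
      Finset.prod_ite_eq' Finset.univ i1 (fun j => M i1 p.2 (g i1))]
    simp [hC]
  calc ∑ p : ι × ι, ∑ k : Fin n → ι, B q p * ∏ j, F p j (k j)
      = ∑ p : ι × ι, B q p * (M ii p.1 (g ii) * M i1 p.2 (g i1) * C) := by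
        refine Finset.sum_congr rfl fun p _ => ?_
        rw [← Finset.mul_sum, ← Fintype.prod_sum (fun j x => F p j x), hprod p]
    _ = ((B * (M ii ⊗ₖ M i1)) q (g ii, g i1)) * C := by
        rw [mul_apply, Finset.sum_mul]
        refine Finset.sum_congr rfl fun p _ => ?_
        simp only [kroneckerMap_apply]
        ring


lemma kron_conjT {α β : Type*} (A : Matrix α α ℂ) (B : Matrix β β ℂ) :
    (A ⊗ₖ B)ᴴ = Aᴴ ⊗ₖ Bᴴ := by
  ext ⟨a,b⟩ ⟨c,d⟩
  simp [conjTranspose_apply, kroneckerMap_apply, mul_comm]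

lemma S23_eq (A : Matrix (ι × ι) (ι × ι) ℂ) : S23 A = (1 : Matrix ι ι ℂ) ⊗ₖ A := by
  ext ⟨x1,x2,x3⟩ ⟨y1,y2,y3⟩
  simp [S23, kroneckerMap_apply, one_apply]

lemma S12_one_kron (B : Matrix ι ι ℂ) :
    S12 ((1 : Matrix ι ι ℂ) ⊗ₖ B) = (1 : Matrix ι ι ℂ) ⊗ₖ (B ⊗ₖ (1 : Matrix ι ι ℂ)) := by
  ext ⟨x1,x2,x3⟩ ⟨y1,y2,y3⟩
  simp only [S12, kroneckerMap_apply, one_apply, of_apply]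
  split_ifs <;> simp

lemma S12_mul (A B : Matrix (ι × ι) (ι × ι) ℂ) : S12 A * S12 B = S12 (A * B) := by
  ext ⟨x1,x2,x3⟩ ⟨y1,y2,y3⟩
  simp only [mul_apply, S12, of_apply, Fintype.sum_prod_type]
  simp [mul_assoc, mul_comm, mul_left_comm, Finset.mul_sum, ite_mul, mul_ite,
    Finset.sum_ite_eq, Finset.sum_ite_eq']

lemma S12_comm (A : Matrix (ι × ι) (ι × ι) ℂ) (C : Matrix ι ι ℂ) :
    S12 A * S23 ((1 : Matrix ι ι ℂ) ⊗ₖ C) = S23 ((1 : Matrix ι ι ℂ) ⊗ₖ C) * S12 A := by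
  ext ⟨x1,x2,x3⟩ ⟨y1,y2,y3⟩
  simp only [mul_apply, S12, S23, of_apply, Fintype.sum_prod_type, kroneckerMap_apply,
    one_apply]
  simp [mul_assoc, mul_comm, mul_left_comm, Finset.mul_sum, ite_mul, mul_ite,
    Finset.sum_ite_eq, Finset.sum_ite_eq']

section alg

lemma R_comm_QQ (S : Matrix (ι × ι) (ι × ι) ℂ) (Q : Matrix ι ι ℂ)
    (hQ : Q ∈ Matrix.unitaryGroup ι ℂ)
    (hcomm : (Q ⊗ₖ Q) * S = S * (Q ⊗ₖ Q))
    (R : Matrix (ι × ι) (ι × ι) ℂ)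
    (hR : R = ((1 : Matrix ι ι ℂ) ⊗ₖ Q) * S * ((1 : Matrix ι ι ℂ) ⊗ₖ Qᴴ)) :
    R * (Q ⊗ₖ Q) = (Q ⊗ₖ Q) * R := by
  have h1 : Q * Qᴴ = 1 := by
    simpa [Matrix.star_eq_conjTranspose] using (Matrix.mem_unitaryGroup_iff).mp hQ
  have h2 : Qᴴ * Q = 1 := by
    simpa [Matrix.star_eq_conjTranspose] using (Matrix.mem_unitaryGroup_iff').mp hQ
  have e1 : ((1 : Matrix ι ι ℂ) ⊗ₖ Qᴴ) * (Q ⊗ₖ Q) = Q ⊗ₖ (1 : Matrix ι ι ℂ) := by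
    rw [← mul_kronecker_mul, one_mul, h2]
  have e2 : (Q ⊗ₖ Q) * ((1 : Matrix ι ι ℂ) ⊗ₖ Qᴴ) = Q ⊗ₖ (1 : Matrix ι ι ℂ) := by
    rw [← mul_kronecker_mul, mul_one, h1]
  have e3 : ((1 : Matrix ι ι ℂ) ⊗ₖ Q) * (Q ⊗ₖ Q) = (Q ⊗ₖ Q) * ((1 : Matrix ι ι ℂ) ⊗ₖ Q) := by
    rw [← mul_kronecker_mul, ← mul_kronecker_mul, one_mul, mul_one]
  subst hR
  rw [mul_assoc (((1 : Matrix ι ι ℂ) ⊗ₖ Q) * S) _ _, e1, ← e2]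
  simp only [← mul_assoc]
  rw [mul_assoc ((1 : Matrix ι ι ℂ) ⊗ₖ Q) S _, ← hcomm]
  simp only [← mul_assoc]
  rw [e3]

lemma key_comm (S : Matrix (ι × ι) (ι × ι) ℂ) (Q : Matrix ι ι ℂ)
    (hQ : Q ∈ Matrix.unitaryGroup ι ℂ)
    (hcomm : (Q ⊗ₖ Q) * S = S * (Q ⊗ₖ Q))
    (R : Matrix (ι × ι) (ι × ι) ℂ)
    (hR : R = ((1 : Matrix ι ι ℂ) ⊗ₖ Q) * S * ((1 : Matrix ι ι ℂ) ⊗ₖ Qᴴ))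
    (i : ℕ) : ((Q ^ i) ⊗ₖ (Q ^ (i + 1))) * S = R * ((Q ^ i) ⊗ₖ (Q ^ (i + 1))) := by
  have h2 : Qᴴ * Q = 1 := by
    simpa [Matrix.star_eq_conjTranspose] using (Matrix.mem_unitaryGroup_iff').mp hQ
  have hRQ := R_comm_QQ S Q hQ hcomm R hR
  induction i with
  | zero =>
      subst hR
      rw [pow_zero, pow_one, mul_assoc, mul_assoc, ← mul_kronecker_mul, one_mul, h2,
        one_kronecker_one, mul_one]
  | succ i ih =>
      have e : ((Q ^ (i + 1)) ⊗ₖ (Q ^ (i + 1 + 1))) = (Q ⊗ₖ Q) * ((Q ^ i) ⊗ₖ (Q ^ (i + 1))) := by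
        rw [← mul_kronecker_mul, ← pow_succ', ← pow_succ']
      rw [e, mul_assoc, ih, ← mul_assoc, ← hRQ, mul_assoc]

end alg

lemma isRMatrix_R (S : Matrix (ι × ι) (ι × ι) ℂ) (hS : IsRMatrix S) (Q : Matrix ι ι ℂ)
    (hQ : Q ∈ Matrix.unitaryGroup ι ℂ)
    (hcomm : (Q ⊗ₖ Q) * S = S * (Q ⊗ₖ Q))
    (R : Matrix (ι × ι) (ι × ι) ℂ)
    (hR : R = ((1 : Matrix ι ι ℂ) ⊗ₖ Q) * S * ((1 : Matrix ι ι ℂ) ⊗ₖ Qᴴ)) :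
    IsRMatrix R := by
  have h1 : Q * Qᴴ = 1 := by
    simpa [Matrix.star_eq_conjTranspose] using (Matrix.mem_unitaryGroup_iff).mp hQ
  have h2 : Qᴴ * Q = 1 := by
    simpa [Matrix.star_eq_conjTranspose] using (Matrix.mem_unitaryGroup_iff').mp hQ
  have hRQ1 : ((1 : Matrix ι ι ℂ) ⊗ₖ Q) * S = R * ((1 : Matrix ι ι ℂ) ⊗ₖ Q) := by
    have := key_comm S Q hQ hcomm R hR 0
    simpa using this
  refine ⟨?_, ?_, ?_⟩
  · subst hR
    rw [conjTranspose_mul, conjTranspose_mul, kron_conjT, kron_conjT, conjTranspose_one,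
      conjTranspose_conjTranspose, hS.1, ← mul_assoc]
  · subst hR
    calc ((1 : Matrix ι ι ℂ) ⊗ₖ Q) * S * ((1 : Matrix ι ι ℂ) ⊗ₖ Qᴴ) *
          (((1 : Matrix ι ι ℂ) ⊗ₖ Q) * S * ((1 : Matrix ι ι ℂ) ⊗ₖ Qᴴ))
        = ((1 : Matrix ι ι ℂ) ⊗ₖ Q) * (S * ((((1 : Matrix ι ι ℂ) ⊗ₖ Qᴴ) *
            ((1 : Matrix ι ι ℂ) ⊗ₖ Q)) * (S * ((1 : Matrix ι ι ℂ) ⊗ₖ Qᴴ)))) := by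
          simp only [mul_assoc]
      _ = 1 := by
          rw [← mul_kronecker_mul, one_mul, h2, one_kronecker_one, one_mul, ← mul_assoc S S,
            hS.2.1, one_mul, ← mul_kronecker_mul, one_mul, h1, one_kronecker_one]
  · -- Yang-Baxter for R
    set W : Matrix (ι × ι × ι) (ι × ι × ι) ℂ :=
      S12 ((1 : Matrix ι ι ℂ) ⊗ₖ Q) * S23 ((1 : Matrix ι ι ℂ) ⊗ₖ (Q ^ 2)) with hW
    have hW_kron : W = (1 : Matrix ι ι ℂ) ⊗ₖ (Q ⊗ₖ (Q ^ 2)) := by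
      rw [hW, S12_one_kron, S23_eq, ← mul_kronecker_mul, one_mul, ← mul_kronecker_mul,
        mul_one, one_mul]
    have ha : S12 R * W = W * S12 S := by
      rw [hW, ← mul_assoc, S12_mul, ← hRQ1, ← S12_mul, mul_assoc, S12_comm, ← mul_assoc]
    have hb : S23 R * W = W * S23 S := by
      have hk1 : (Q ⊗ₖ (Q ^ 2)) * S = R * (Q ⊗ₖ (Q ^ 2)) := by
        have := key_comm S Q hQ hcomm R hR 1
        norm_num at this
        exact this
      rw [hW_kron, S23_eq, S23_eq, ← mul_kronecker_mul, ← mul_kronecker_mul, one_mul,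
        ← hk1]
    have hWW : W * Wᴴ = 1 := by
      rw [hW_kron, kron_conjT, kron_conjT, conjTranspose_one, ← mul_kronecker_mul, one_mul,
        ← mul_kronecker_mul, h1]
      have : Q ^ 2 * (Q ^ 2)ᴴ = 1 := by
        rw [conjTranspose_pow, pow_two, pow_two, mul_assoc, ← mul_assoc Q Qᴴ, h1, one_mul, h1]
      rw [this, one_kronecker_one, one_kronecker_one]
    have ha' : ∀ x, S12 R * (W * x) = W * (S12 S * x) := fun x => by
      rw [← mul_assoc, ha, mul_assoc]
    have hb' : ∀ x, S23 R * (W * x) = W * (S23 S * x) := fun x => by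
      rw [← mul_assoc, hb, mul_assoc]
    have hYB := hS.2.2
    unfold YangBaxter at hYB ⊢
    have hchain : S12 R * S23 R * S12 R * W = S23 R * S12 R * S23 R * W := by
      simp only [mul_assoc]
      rw [ha, hb', ha', hb, ha', hb']
      congr 1
      simp only [← mul_assoc]
      exact hYB
    calc S12 R * S23 R * S12 R = S12 R * S23 R * S12 R * W * Wᴴ := by
          rw [mul_assoc (S12 R * S23 R * S12 R) W Wᴴ, hWW, mul_one]
      _ = S23 R * S12 R * S23 R * W * Wᴴ := by rw [hchain]
      _ = S23 R * S12 R * S23 R := by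
          rw [mul_assoc (S23 R * S12 R * S23 R) W Wᴴ, hWW, mul_one]

lemma intertwine_gen (S : Matrix (ι × ι) (ι × ι) ℂ) (Q : Matrix ι ι ℂ)
    (hQ : Q ∈ Matrix.unitaryGroup ι ℂ)
    (hcomm : (Q ⊗ₖ Q) * S = S * (Q ⊗ₖ Q))
    (R : Matrix (ι × ι) (ι × ι) ℂ)
    (hR : R = ((1 : Matrix ι ι ℂ) ⊗ₖ Q) * S * ((1 : Matrix ι ι ℂ) ⊗ₖ Qᴴ))
    (n i : ℕ) (h : i + 1 < n) :
    powerTensor Q n * adjOp S n i h = adjOp R n i h * powerTensor Q n := by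
  have hk := key_comm S Q hQ hcomm R hR i
  have h1 : powerTensor Q n = tens (fun j : Fin n => Q ^ (j : ℕ)) := rfl
  rw [h1, tens_mul_adjOp, adjOp_mul_tens]
  ext f g
  simp only [Matrix.of_apply]
  congr 1
  exact congrFun (congrFun (congrArg (fun (X : Matrix (ι × ι) (ι × ι) ℂ) =>
    (X : (ι × ι) → (ι × ι) → ℂ)) hk) _) _

end Aux

/-- type 2 equivalence: if `Q` is unitary with `[S, Q ⊗ Q] = 0` and
`R = (1 ⊗ Q) S (1 ⊗ Q*)`, then `R` is an involutive R-matrix and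
`Y_n = 1 ⊗ Q ⊗ ⋯ ⊗ Q^{n-1}` intertwines `D_n^S` and `D_n^R`. -/
theorem statement8 {ι : Type*} [Fintype ι] [DecidableEq ι]
    (S : Matrix (ι × ι) (ι × ι) ℂ) (hS : IsRMatrix S)
    (Q : Matrix ι ι ℂ) (hQ : Q ∈ Matrix.unitaryGroup ι ℂ)
    (hcomm : (Q ⊗ₖ Q) * S = S * (Q ⊗ₖ Q))
    (R : Matrix (ι × ι) (ι × ι) ℂ)
    (hR : R = ((1 : Matrix ι ι ℂ) ⊗ₖ Q) * S * ((1 : Matrix ι ι ℂ) ⊗ₖ Qᴴ)) :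
    IsRMatrix R ∧
      ∀ (n : ℕ)
        (DS DR : Equiv.Perm (Fin n) →* Matrix.unitaryGroup (Fin n → ι) ℂ),
        (∀ (i : ℕ) (h : i + 1 < n),
          (DS (Equiv.swap ⟨i, Nat.lt_of_succ_lt h⟩ ⟨i + 1, h⟩) : Matrix _ _ ℂ) =
            adjOp S n i h) →
        (∀ (i : ℕ) (h : i + 1 < n),
          (DR (Equiv.swap ⟨i, Nat.lt_of_succ_lt h⟩ ⟨i + 1, h⟩) : Matrix _ _ ℂ) =
            adjOp R n i h) →
        ∀ π : Equiv.Perm (Fin n),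
          powerTensor Q n * (DS π : Matrix _ _ ℂ) =
            (DR π : Matrix _ _ ℂ) * powerTensor Q n := by
  refine ⟨isRMatrix_R S hS Q hQ hcomm R hR, ?_⟩
  intro n DS DR hDS hDR
  match n with
  | 0 =>
      intro π
      have hπ : π = 1 := Equiv.ext fun x => x.elim0
      rw [hπ, _root_.map_one]
      simp
  | (m + 1) =>
      suffices hcl : ∀ π ∈ Submonoid.closure
          (Set.range fun i : Fin m => Equiv.swap i.castSucc i.succ),
          powerTensor Q (m + 1) * (DS π : Matrix _ _ ℂ) =
            (DR π : Matrix _ _ ℂ) * powerTensor Q (m + 1) by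
        intro π
        exact hcl π (by rw [Equiv.Perm.mclosure_swap_castSucc_succ]; trivial)
      intro π hπ
      induction hπ using Submonoid.closure_induction with
      | mem x hx =>
          obtain ⟨i, rfl⟩ := hx
          beta_reduce
          have hlt : (i : ℕ) + 1 < m + 1 := Nat.succ_lt_succ i.2
          have hcs : i.castSucc = (⟨(i : ℕ), Nat.lt_of_succ_lt hlt⟩ : Fin (m + 1)) := by
            ext; simp
          have hsc : i.succ = (⟨(i : ℕ) + 1, hlt⟩ : Fin (m + 1)) := by
            ext; simp
          rw [hcs, hsc, hDS (i : ℕ) hlt, hDR (i : ℕ) hlt]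
          exact intertwine_gen S Q hQ hcomm R hR (m + 1) (i : ℕ) hlt
      | one =>
          rw [_root_.map_one]
          simp
      | mul x y hx hy ihx ihy =>
          rw [_root_.map_mul, _root_.map_mul, MulMemClass.coe_mul, MulMemClass.coe_mul, ← mul_assoc,
            ihx, mul_assoc, ihy, ← mul_assoc]
end

section
/- In the Fock representation of an involutive R-matrix S on H (with internal space L), the creation operators z*_S(ψ), defined on n-particle vectors by z*_S(ψ) Φ_n = √(n+1) P_{n+1}^S (ψ ⊗ Φ_n), satisfy the exchange relation z*_{S,α}(f) z*_{S,β}(g) = Σ_{γ,δ} S^{γδ}_{αβ} z*_{S,γ}(g) z*_{S,δ}(f) on the finite-particle subspace. -/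
open Matrix

/-- The (finite-particle part of the) `n`-particle space `H^{⊗ n} ⊗ L^{⊗ n}`, where `H` has
orthonormal basis indexed by `ι` and `L` has orthonormal basis indexed by `κ`: formal finite
linear combinations of elementary basis tensors. -/
abbrev NPart (ι κ : Type*) (n : ℕ) := ((Fin n → ι) × (Fin n → κ)) →₀ ℂ

/-- The action of `S_F = S ⊗ F_L` on the `i`-th and `(i+1)`-st slots of
`H^{⊗ n} ⊗ L^{⊗ n}`: `S` mixes the `ι`-labels of slots `i, i+1` while the `κ`-labels of
these two slots are flipped. This is `D_n^{S_F}(τ_i)`. -/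
noncomputable def adjAct {ι κ : Type*} [Fintype ι] (S : Matrix (ι × ι) (ι × ι) ℂ)
    (n i : ℕ) (h : i + 1 < n) : NPart ι κ n →ₗ[ℂ] NPart ι κ n :=
  Finsupp.lsum ℂ fun x => LinearMap.toSpanSingleton ℂ _
    (∑ c : ι, ∑ d : ι,
      S (c, d) (x.1 ⟨i, Nat.lt_of_succ_lt h⟩, x.1 ⟨i + 1, h⟩) •
        Finsupp.single
          (Function.update (Function.update x.1 ⟨i, Nat.lt_of_succ_lt h⟩ c) ⟨i + 1, h⟩ d,
            x.2 ∘ Equiv.swap ⟨i, Nat.lt_of_succ_lt h⟩ ⟨i + 1, h⟩) (1 : ℂ))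

/-- The mean projection `P_n^S = (1/n!) Σ_{π ∈ S_n} D_n(π)` of a representation `D`. -/
noncomputable def meanProj {ι κ : Type*}
    (D : ∀ n : ℕ, Equiv.Perm (Fin n) →* Module.End ℂ (NPart ι κ n)) (n : ℕ) :
    Module.End ℂ (NPart ι κ n) :=
  ((n.factorial : ℂ)⁻¹) • ∑ π : Equiv.Perm (Fin n), D n π

/-- Tensoring `(e_α ⊗ f)` in front: the map `Φ_n ↦ (e_α ⊗ f) ⊗ Φ_n` from
`H^{⊗ n} ⊗ L^{⊗ n}` to `H^{⊗ (n+1)} ⊗ L^{⊗ (n+1)}` (with the `H`- and `L`-parts kept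
disentangled). -/
noncomputable def prepend {ι κ : Type*} (α : ι) (f : κ →₀ ℂ) (n : ℕ) :
    NPart ι κ n →ₗ[ℂ] NPart ι κ (n + 1) :=
  Finsupp.lsum ℂ fun x => LinearMap.toSpanSingleton ℂ _
    (f.sum fun k c => c • Finsupp.single (Fin.cons α x.1, Fin.cons k x.2) (1 : ℂ))

/-- The Zamolodchikov creation operator
`z*_{S,α}(f) Φ_n = √(n+1) P_{n+1}^S ((e_α ⊗ f) ⊗ Φ_n)`. -/
noncomputable def creOp {ι κ : Type*}
    (D : ∀ n : ℕ, Equiv.Perm (Fin n) →* Module.End ℂ (NPart ι κ n)) (n : ℕ)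
    (α : ι) (f : κ →₀ ℂ) : NPart ι κ n →ₗ[ℂ] NPart ι κ (n + 1) :=
  ((Real.sqrt (n + 1) : ℝ) : ℂ) •
    ((meanProj D (n + 1) : NPart ι κ (n + 1) →ₗ[ℂ] NPart ι κ (n + 1)).comp (prepend α f n))


section Aux
variable {ι κ : Type*} [Fintype ι]

lemma adjAct_single (S : Matrix (ι × ι) (ι × ι) ℂ) (n i : ℕ) (h : i + 1 < n)
    (x : (Fin n → ι) × (Fin n → κ)) :
    adjAct S n i h (Finsupp.single x 1) =
      ∑ c : ι, ∑ d : ι,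
        S (c, d) (x.1 ⟨i, Nat.lt_of_succ_lt h⟩, x.1 ⟨i + 1, h⟩) •
          Finsupp.single
            (Function.update (Function.update x.1 ⟨i, Nat.lt_of_succ_lt h⟩ c) ⟨i + 1, h⟩ d,
              x.2 ∘ Equiv.swap ⟨i, Nat.lt_of_succ_lt h⟩ ⟨i + 1, h⟩) (1 : ℂ) := by
  simp [adjAct, Finsupp.lsum_single, LinearMap.toSpanSingleton_apply]

lemma prepend_single (α : ι) (f : κ →₀ ℂ) (n : ℕ) (x : (Fin n → ι) × (Fin n → κ)) :
    prepend α f n (Finsupp.single x 1) =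
      f.sum fun k c => c • Finsupp.single (Fin.cons α x.1, Fin.cons k x.2) (1 : ℂ) := by
  simp [prepend, Finsupp.lsum_single, LinearMap.toSpanSingleton_apply]

lemma cons_comp_swap {m : ℕ} {X : Type*} (k : X) (v : Fin m → X) (a b : Fin m) :
    (Fin.cons k v : Fin (m+1) → X) ∘ Equiv.swap a.succ b.succ = Fin.cons k (v ∘ Equiv.swap a b) := by
  funext j
  cases j using Fin.cases with
  | zero =>
      simp [Function.comp,
        Equiv.swap_apply_of_ne_of_ne (Fin.succ_ne_zero a).symm (Fin.succ_ne_zero b).symm]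
  | succ t =>
      simp [Function.comp, Function.Injective.swap_apply (Fin.succ_injective m) a b t]

lemma cons_cons_comp_swap01 {m : ℕ} {X : Type*} (a b : X) (v : Fin m → X) :
    (Fin.cons a (Fin.cons b v) : Fin (m+2) → X) ∘ Equiv.swap 0 1 = Fin.cons b (Fin.cons a v) := by
  have h1 : ((1 : Fin (m+2)) : ℕ) = 1 := rfl
  funext j
  cases j using Fin.cases with
  | zero =>
      rw [Function.comp_apply, Equiv.swap_apply_left]
      rfl
  | succ t =>
      cases t using Fin.cases with
      | zero =>
          have e1 : (Fin.succ (0 : Fin (m+1))) = (1 : Fin (m+2)) := rfl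
          rw [Function.comp_apply, e1, Equiv.swap_apply_right]
          rfl
      | succ s =>
          have h2 : Equiv.swap (0 : Fin (m+2)) 1 s.succ.succ = s.succ.succ :=
            Equiv.swap_apply_of_ne_of_ne (Fin.succ_ne_zero _)
              (by simp [Fin.ext_iff, h1])
          simp [Function.comp, h2]

/-- Lift a permutation of `Fin m` to one of `Fin (m+1)` fixing `0`. -/
def liftPerm (m : ℕ) : Equiv.Perm (Fin m) →* Equiv.Perm (Fin (m + 1)) where
  toFun π := Equiv.Perm.decomposeFin.symm (0, π)
  map_one' := by
    ext x
    cases x using Fin.cases <;>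
      simp [Equiv.Perm.decomposeFin_symm_apply_zero, Equiv.Perm.decomposeFin_symm_apply_succ]
  map_mul' π σ := by
    ext x
    cases x using Fin.cases <;>
      simp [Equiv.Perm.decomposeFin_symm_apply_zero, Equiv.Perm.decomposeFin_symm_apply_succ]

@[simp] lemma liftPerm_zero (m : ℕ) (π : Equiv.Perm (Fin m)) : liftPerm m π 0 = 0 :=
  Equiv.Perm.decomposeFin_symm_apply_zero 0 π

@[simp] lemma liftPerm_succ (m : ℕ) (π : Equiv.Perm (Fin m)) (i : Fin m) :
    liftPerm m π i.succ = (π i).succ := by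
  simp [liftPerm, Equiv.Perm.decomposeFin_symm_apply_succ]

lemma liftPerm_swap (m : ℕ) (a b : Fin m) :
    liftPerm m (Equiv.swap a b) = Equiv.swap a.succ b.succ := by
  ext x
  cases x using Fin.cases with
  | zero =>
      rw [liftPerm_zero,
        Equiv.swap_apply_of_ne_of_ne (Fin.succ_ne_zero a).symm (Fin.succ_ne_zero b).symm]
  | succ t =>
      rw [liftPerm_succ, Function.Injective.swap_apply (Fin.succ_injective m) a b t]
lemma prepend_zero (α : ι) (n : ℕ) : prepend (κ := κ) α 0 n = 0 := by
  refine Finsupp.lhom_ext' fun x => LinearMap.ext_ring ?_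
  rw [LinearMap.comp_apply, Finsupp.lsingle_apply, prepend_single]
  simp

lemma prepend_fadd (α : ι) (f f' : κ →₀ ℂ) (n : ℕ) :
    prepend α (f + f') n = prepend α f n + prepend α f' n := by
  refine Finsupp.lhom_ext' fun x => LinearMap.ext_ring ?_
  simp only [LinearMap.comp_apply, Finsupp.lsingle_apply, LinearMap.add_apply, prepend_single]
  exact Finsupp.sum_add_index' (by simp) (by simp [add_smul])

lemma prepend_single_single (α : ι) (k : κ) (a : ℂ) (n : ℕ) (x : (Fin n → ι) × (Fin n → κ)) :
    prepend α (Finsupp.single k a) n (Finsupp.single x 1) =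
      a • Finsupp.single (Fin.cons α x.1, Fin.cons k x.2) (1 : ℂ) := by
  rw [prepend_single]
  exact Finsupp.sum_single_index (by simp)


lemma adjAct_single_succ (S : Matrix (ι × ι) (ι × ι) ℂ) (m i : ℕ) (hi : i + 1 < m)
    (y : (Fin (m+1) → ι) × (Fin (m+1) → κ)) :
    adjAct S (m+1) (i+1) (Nat.succ_lt_succ hi) (Finsupp.single y 1) =
      ∑ c : ι, ∑ d : ι,
        S (c, d) (y.1 (Fin.succ ⟨i, Nat.lt_of_succ_lt hi⟩), y.1 (Fin.succ ⟨i+1, hi⟩)) •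
          Finsupp.single
            (Function.update (Function.update y.1 (Fin.succ ⟨i, Nat.lt_of_succ_lt hi⟩) c)
              (Fin.succ ⟨i+1, hi⟩) d,
              y.2 ∘ Equiv.swap (Fin.succ ⟨i, Nat.lt_of_succ_lt hi⟩) (Fin.succ ⟨i+1, hi⟩)) (1:ℂ) :=
  adjAct_single S (m+1) (i+1) _ y

lemma prepend_adjAct (S : Matrix (ι × ι) (ι × ι) ℂ) (γ : ι) (h : κ →₀ ℂ) (m i : ℕ)
    (hi : i + 1 < m) :
    (prepend γ h m) ∘ₗ adjAct S m i hi =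
      (adjAct (κ := κ) S (m + 1) (i + 1) (Nat.succ_lt_succ hi)) ∘ₗ prepend γ h m := by
  induction h using Finsupp.induction with
  | zero => simp [prepend_zero]
  | single_add k a h' hk hane IH =>
      rw [prepend_fadd, LinearMap.add_comp, LinearMap.comp_add, IH]
      congr 1
      refine Finsupp.lhom_ext' fun x => LinearMap.ext_ring ?_
      simp only [LinearMap.comp_apply, Finsupp.lsingle_apply]
      rw [adjAct_single, map_sum]
      simp only [map_sum, _root_.map_smul, prepend_single_single]
      rw [adjAct_single_succ S m i hi]
      simp only [Fin.cons_succ, ← Fin.cons_update, cons_comp_swap]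
      rw [Finset.smul_sum]
      refine Finset.sum_congr rfl fun c _ => ?_
      rw [Finset.smul_sum]
      exact Finset.sum_congr rfl fun d _ => smul_comm _ _ _

lemma lm_comp_sum {M N P : Type*} [AddCommMonoid M] [Module ℂ M] [AddCommMonoid N] [Module ℂ N]
    [AddCommMonoid P] [Module ℂ P] {A : Type*} (s : Finset A)
    (f : N →ₗ[ℂ] P) (g : A → (M →ₗ[ℂ] N)) :
    f ∘ₗ (∑ i ∈ s, g i) = ∑ i ∈ s, f ∘ₗ g i := by
  ext x
  simp

lemma lm_sum_comp {M N P : Type*} [AddCommMonoid M] [Module ℂ M] [AddCommMonoid N] [Module ℂ N]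
    [AddCommMonoid P] [Module ℂ P] {A : Type*} (s : Finset A)
    (f : M →ₗ[ℂ] N) (g : A → (N →ₗ[ℂ] P)) :
    (∑ i ∈ s, g i) ∘ₗ f = ∑ i ∈ s, g i ∘ₗ f := by
  ext x
  simp

lemma meanProj_absorb (D : ∀ n : ℕ, Equiv.Perm (Fin n) →* Module.End ℂ (NPart ι κ n))
    (m : ℕ) (π : Equiv.Perm (Fin m)) :
    (meanProj D m) * (D m π) = meanProj D m := by
  unfold meanProj
  rw [smul_mul_assoc, Finset.sum_mul]
  congr 1
  calc ∑ σ : Equiv.Perm (Fin m), D m σ * D m π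
      = ∑ σ : Equiv.Perm (Fin m), D m (σ * π) := by simp [← _root_.map_mul]
    _ = ∑ σ : Equiv.Perm (Fin m), D m σ := Equiv.sum_comp (Equiv.mulRight π) (D m)

lemma prepend_D (S : Matrix (ι × ι) (ι × ι) ℂ)
    (D : ∀ n : ℕ, Equiv.Perm (Fin n) →* Module.End ℂ (NPart ι κ n))
    (hD : ∀ (n i : ℕ) (h : i + 1 < n),
      (D n (Equiv.swap ⟨i, Nat.lt_of_succ_lt h⟩ ⟨i + 1, h⟩) :
          NPart ι κ n →ₗ[ℂ] NPart ι κ n) = adjAct S n i h)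
    (γ : ι) (h : κ →₀ ℂ) (m : ℕ) (π : Equiv.Perm (Fin m)) :
    prepend γ h m ∘ₗ (D m π : NPart ι κ m →ₗ[ℂ] NPart ι κ m) =
      (D (m + 1) (liftPerm m π) : NPart ι κ (m+1) →ₗ[ℂ] NPart ι κ (m+1)) ∘ₗ prepend γ h m := by
  cases m with
  | zero =>
      have hπ : π = 1 := Subsingleton.elim _ _
      subst hπ
      simp [Module.End.one_eq_id]
  | succ m' =>
      have hπ : π ∈ Submonoid.closure
          (Set.range fun i : Fin m' => Equiv.swap i.castSucc i.succ) := by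
        rw [Equiv.Perm.mclosure_swap_castSucc_succ]; trivial
      induction hπ using Submonoid.closure_induction with
      | mem g hg =>
          obtain ⟨j, rfl⟩ := hg
          have hj : (j : ℕ) + 1 < m' + 1 := Nat.succ_lt_succ j.isLt
          have hj2 : (j : ℕ) + 1 + 1 < m' + 1 + 1 := Nat.succ_lt_succ hj
          have e1 : Equiv.swap j.castSucc j.succ =
              Equiv.swap (⟨(j : ℕ), Nat.lt_of_succ_lt hj⟩ : Fin (m' + 1)) ⟨(j : ℕ) + 1, hj⟩ := rfl
          have e2 : liftPerm (m' + 1)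
                (Equiv.swap (⟨(j : ℕ), Nat.lt_of_succ_lt hj⟩ : Fin (m' + 1)) ⟨(j : ℕ) + 1, hj⟩) =
              Equiv.swap (⟨(j : ℕ) + 1, Nat.lt_of_succ_lt hj2⟩ : Fin (m' + 1 + 1))
                ⟨(j : ℕ) + 1 + 1, hj2⟩ := by
            rw [liftPerm_swap]
            rfl
          beta_reduce
          rw [e1, hD (m' + 1) (j : ℕ) hj, e2, hD (m' + 1 + 1) ((j : ℕ) + 1) hj2]
          exact prepend_adjAct S γ h (m' + 1) (j : ℕ) hj
      | one => simp [Module.End.one_eq_id]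
      | mul a b ha hb IHa IHb =>
          rw [_root_.map_mul, _root_.map_mul, _root_.map_mul]
          simp only [Module.End.mul_eq_comp]
          rw [← LinearMap.comp_assoc, IHa, LinearMap.comp_assoc, IHb, ← LinearMap.comp_assoc]

lemma meanProj_prepend (S : Matrix (ι × ι) (ι × ι) ℂ)
    (D : ∀ n : ℕ, Equiv.Perm (Fin n) →* Module.End ℂ (NPart ι κ n))
    (hD : ∀ (n i : ℕ) (h : i + 1 < n),
      (D n (Equiv.swap ⟨i, Nat.lt_of_succ_lt h⟩ ⟨i + 1, h⟩) :
          NPart ι κ n →ₗ[ℂ] NPart ι κ n) = adjAct S n i h)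
    (γ : ι) (h : κ →₀ ℂ) (m : ℕ) :
    ((meanProj D (m + 1) : NPart ι κ (m+1) →ₗ[ℂ] NPart ι κ (m+1)) ∘ₗ prepend γ h m) ∘ₗ
        (meanProj D m : NPart ι κ m →ₗ[ℂ] NPart ι κ m) =
      (meanProj D (m + 1) : NPart ι κ (m+1) →ₗ[ℂ] NPart ι κ (m+1)) ∘ₗ prepend γ h m := by
  conv_lhs =>
    rw [show (meanProj D m : NPart ι κ m →ₗ[ℂ] NPart ι κ m) =
      ((m.factorial : ℂ)⁻¹ • ∑ π : Equiv.Perm (Fin m), (D m π : NPart ι κ m →ₗ[ℂ] NPart ι κ m))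
      from rfl]
  rw [LinearMap.comp_smul, lm_comp_sum]
  have step : ∀ π : Equiv.Perm (Fin m),
      ((meanProj D (m + 1) : NPart ι κ (m+1) →ₗ[ℂ] NPart ι κ (m+1)) ∘ₗ prepend γ h m) ∘ₗ
        (D m π : NPart ι κ m →ₗ[ℂ] NPart ι κ m) =
      (meanProj D (m + 1) : NPart ι κ (m+1) →ₗ[ℂ] NPart ι κ (m+1)) ∘ₗ prepend γ h m := by
    intro π
    rw [LinearMap.comp_assoc, prepend_D S D hD, ← LinearMap.comp_assoc,
      ← Module.End.mul_eq_comp (meanProj D (m+1)), meanProj_absorb]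
  simp only [step, Finset.sum_const, Finset.card_univ, Fintype.card_perm, Fintype.card_fin]
  rw [← Nat.cast_smul_eq_nsmul ℂ, smul_smul, inv_mul_cancel₀ (by exact_mod_cast m.factorial_ne_zero), one_smul]
lemma adjAct_single_zero (S : Matrix (ι × ι) (ι × ι) ℂ) (m : ℕ) (h01 : 0 + 1 < m + 1 + 1)
    (y : (Fin (m + 1 + 1) → ι) × (Fin (m + 1 + 1) → κ)) :
    adjAct S (m + 1 + 1) 0 h01 (Finsupp.single y 1) =
      ∑ c : ι, ∑ d : ι,
        S (c, d) (y.1 0, y.1 (Fin.succ 0)) •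
          Finsupp.single
            (Function.update (Function.update y.1 0 c) (Fin.succ 0) d,
              y.2 ∘ Equiv.swap 0 (Fin.succ 0)) (1 : ℂ) :=
  adjAct_single S (m + 1 + 1) 0 h01 y

lemma exch_core (S : Matrix (ι × ι) (ι × ι) ℂ) (α β : ι) (k k' : κ) (a b : ℂ) (m : ℕ)
    (h01 : 0 + 1 < m + 1 + 1) :
    adjAct (κ := κ) S (m + 1 + 1) 0 h01 ∘ₗ
        (prepend α (Finsupp.single k a) (m + 1) ∘ₗ prepend β (Finsupp.single k' b) m) =
      ∑ γ : ι, ∑ δ : ι, S (γ, δ) (α, β) •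
        (prepend γ (Finsupp.single k' b) (m + 1) ∘ₗ prepend δ (Finsupp.single k a) m) := by
  refine Finsupp.lhom_ext' fun x => LinearMap.ext_ring ?_
  simp only [LinearMap.comp_apply, Finsupp.lsingle_apply, LinearMap.sum_apply,
    LinearMap.smul_apply]
  rw [prepend_single_single, _root_.map_smul, prepend_single_single, _root_.map_smul,
    _root_.map_smul, adjAct_single_zero]
  have e1 : (1 : Fin (m + 1 + 1)) = Fin.succ 0 := rfl
  simp only [Fin.cons_zero, Fin.cons_succ, Fin.update_cons_zero, ← Fin.cons_update,
    ← e1, cons_cons_comp_swap01, prepend_single_single, _root_.map_smul]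
  simp only [e1, Fin.cons_succ, Fin.cons_zero, ← Fin.cons_update, Fin.update_cons_zero]
  simp only [Finset.smul_sum]
  refine Finset.sum_congr rfl fun c _ => Finset.sum_congr rfl fun d _ => ?_
  simp only [smul_smul]
  congr 1
  ring

lemma exch_f (S : Matrix (ι × ι) (ι × ι) ℂ) (α β : ι) (k : κ) (a : ℂ) (g : κ →₀ ℂ) (m : ℕ)
    (h01 : 0 + 1 < m + 1 + 1) :
    adjAct (κ := κ) S (m + 1 + 1) 0 h01 ∘ₗ
        (prepend α (Finsupp.single k a) (m + 1) ∘ₗ prepend β g m) =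
      ∑ γ : ι, ∑ δ : ι, S (γ, δ) (α, β) •
        (prepend γ g (m + 1) ∘ₗ prepend δ (Finsupp.single k a) m) := by
  induction g using Finsupp.induction with
  | zero => simp [prepend_zero]
  | single_add k' b g' hk hbne IH =>
      simp only [prepend_fadd, LinearMap.add_comp, LinearMap.comp_add, smul_add,
        Finset.sum_add_distrib]
      rw [IH, exch_core]

lemma exch (S : Matrix (ι × ι) (ι × ι) ℂ) (α β : ι) (f g : κ →₀ ℂ) (m : ℕ)
    (h01 : 0 + 1 < m + 1 + 1) :
    adjAct (κ := κ) S (m + 1 + 1) 0 h01 ∘ₗ (prepend α f (m + 1) ∘ₗ prepend β g m) =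
      ∑ γ : ι, ∑ δ : ι, S (γ, δ) (α, β) • (prepend γ g (m + 1) ∘ₗ prepend δ f m) := by
  induction f using Finsupp.induction with
  | zero => simp [prepend_zero]
  | single_add k a f' hk hane IH =>
      simp only [prepend_fadd, LinearMap.add_comp, LinearMap.comp_add, smul_add,
        Finset.sum_add_distrib]
      rw [IH, exch_f]

end Aux


/-- the creation operators of the Fock representation of an involutive R-matrix
`S` satisfy the exchange relation
`z*_{S,α}(f) z*_{S,β}(g) = Σ_{γ,δ} S^{γδ}_{αβ} z*_{S,γ}(g) z*_{S,δ}(f)`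
on the finite-particle subspace. -/
theorem statement11 {ι κ : Type*} [Fintype ι] [DecidableEq ι]
    (S : Matrix (ι × ι) (ι × ι) ℂ) (hS : IsRMatrix S)
    (D : ∀ n : ℕ, Equiv.Perm (Fin n) →* Module.End ℂ (NPart ι κ n))
    (hD : ∀ (n i : ℕ) (h : i + 1 < n),
      (D n (Equiv.swap ⟨i, Nat.lt_of_succ_lt h⟩ ⟨i + 1, h⟩) :
          NPart ι κ n →ₗ[ℂ] NPart ι κ n) = adjAct S n i h)
    (n : ℕ) (α β : ι) (f g : κ →₀ ℂ) :
    (creOp D (n + 1) α f).comp (creOp D n β g) =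
      ∑ γ : ι, ∑ δ : ι,
        S (γ, δ) (α, β) • ((creOp D (n + 1) γ g).comp (creOp D n δ f)) := by
  have h01 : 0 + 1 < n + 1 + 1 := by omega
  have key : ∀ (a b : ι) (u v : κ →₀ ℂ),
      ((meanProj D (n + 1 + 1) : NPart ι κ (n+1+1) →ₗ[ℂ] NPart ι κ (n+1+1)).comp
          (prepend a u (n + 1))).comp
        ((meanProj D (n + 1) : NPart ι κ (n+1) →ₗ[ℂ] NPart ι κ (n+1)).comp (prepend b v n)) =
      (meanProj D (n + 1 + 1) : NPart ι κ (n+1+1) →ₗ[ℂ] NPart ι κ (n+1+1)).comp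
        ((prepend a u (n + 1)).comp (prepend b v n)) := by
    intro a b u v
    rw [← LinearMap.comp_assoc, meanProj_prepend S D hD, LinearMap.comp_assoc]
  have habs : (meanProj D (n + 1 + 1) : NPart ι κ (n+1+1) →ₗ[ℂ] NPart ι κ (n+1+1)) =
      (meanProj D (n + 1 + 1) : NPart ι κ (n+1+1) →ₗ[ℂ] NPart ι κ (n+1+1)) ∘ₗ
        (adjAct (κ := κ) S (n + 1 + 1) 0 h01) := by
    rw [← hD (n + 1 + 1) 0 h01, ← Module.End.mul_eq_comp, meanProj_absorb]
  simp only [creOp, LinearMap.smul_comp, LinearMap.comp_smul, smul_smul]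
  simp only [key]
  conv_lhs => rw [habs, LinearMap.comp_assoc, exch S α β f g n h01]
  rw [lm_comp_sum, Finset.smul_sum]
  refine Finset.sum_congr rfl fun γ _ => ?_
  rw [lm_comp_sum, Finset.smul_sum]
  refine Finset.sum_congr rfl fun δ _ => ?_
  rw [LinearMap.comp_smul]
  simp only [smul_smul]
  congr 1
  ring
end

section
/- An involutive R-matrix of normal form S = ⊞_{i=1}^N ε_i · id_{H_i⊗H_i} (with signs ε_i ∈ {±1} and dim H_i = d_i) is crossing symmetric, i.e. S^{αβ}_{δγ} = S^{δα}_{γβ} for all basis indices, if and only if d_i = 1 for all i (S is diagonal). -/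
open Matrix

/-- The normal-form involutive R-matrix `⊞_{i=1}^N ε_i · id_{H_i ⊗ H_i}` on
`H = ⊕_i H_i` with `dim H_i = d i`, w.r.t. an adapted orthonormal basis indexed by
`Σ i, Fin (d i)`: it acts as `ε_i · id` on `H_i ⊗ H_i` and as the tensor flip on the
mixed components `H_i ⊗ H_j`, `i ≠ j`. -/
def normalForm (N : ℕ) (d : Fin N → ℕ) (ε : Fin N → ℂ) :
    Matrix ((Σ i : Fin N, Fin (d i)) × (Σ i : Fin N, Fin (d i)))
      ((Σ i : Fin N, Fin (d i)) × (Σ i : Fin N, Fin (d i))) ℂ :=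
  Matrix.of fun x y =>
    if y.1.1 = y.2.1 then (if x = y then ε y.1.1 else 0)
    else (if x.1 = y.2 ∧ x.2 = y.1 then 1 else 0)

/-- Crossing symmetry `S^{αβ}_{δγ} = S^{δα}_{γβ}` of a constant R-matrix, in terms of its
matrix elements `S^{αβ}_{δγ} = ⟨e_α ⊗ e_β, S (e_δ ⊗ e_γ)⟩`. -/
def CrossingSymmetric {α : Type*} (S : Matrix (α × α) (α × α) ℂ) : Prop :=
  ∀ a b c d : α, S (a, b) (d, c) = S (d, a) (c, b)

/-- a normal-form involutive R-matrix `⊞_i ε_i 1_{d_i²}` (with signs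
`ε_i ∈ {±1}`) is crossing symmetric if and only if it is diagonal, i.e. `d_i = 1` for
all `i`. -/
theorem statement15 (N : ℕ) (d : Fin N → ℕ) (hd : ∀ i, 0 < d i)
    (ε : Fin N → ℂ) (hε : ∀ i, ε i = 1 ∨ ε i = -1) :
    CrossingSymmetric (normalForm N d ε) ↔ ∀ i, d i = 1 := by
  constructor
  · intro h i
    by_contra hne
    have h2 : 2 ≤ d i := by have := hd i; omega
    have := h ⟨i, ⟨0, by omega⟩⟩ ⟨i, ⟨0, by omega⟩⟩ ⟨i, ⟨1, by omega⟩⟩ ⟨i, ⟨1, by omega⟩⟩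
    simp only [normalForm, Matrix.of_apply, Prod.mk.injEq, Sigma.mk.inj_iff, heq_eq_eq,
      if_pos rfl] at this
    have h0 : ε i ≠ 0 := by rcases hε i with h' | h' <;> simp [h']
    simp [Fin.ext_iff] at this
    exact h0 this.symm
  · intro h1 a b c dd
    have key : ∀ x y : (Σ i : Fin N, Fin (d i)), x = y ↔ x.1 = y.1 := by
      intro x y
      constructor
      · rintro rfl; rfl
      · intro h
        obtain ⟨i, xi⟩ := x; obtain ⟨j, yj⟩ := y
        dsimp at h; subst h
        congr 1
        apply Fin.ext
        have hx := xi.isLt; have hy := yj.isLt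
        have := h1 i; omega
    simp only [normalForm, Matrix.of_apply, Prod.mk.injEq, key]
    obtain ⟨i, _⟩ := a; obtain ⟨j, _⟩ := b; obtain ⟨k, _⟩ := c; obtain ⟨l, _⟩ := dd
    simp only
    by_cases hlk : l = k <;> by_cases hkj : k = j <;> simp_all <;> aesop
end

section
/- A bounded analytic function F on the strip S(0,π), continuous up to the boundary, non-vanishing, bounded below in modulus, of unit modulus on the real line, and satisfying F(θ+iπ) = 1/F(θ) for real θ, extends via F(ζ) := 1/conj(F(conj ζ)) on the lower strip to a bounded, 2πi-periodic entire function, and is therefore constant. -/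
open Complex

/-- a bounded analytic function `F` on the strip `S(0,π)`, continuous up to
the boundary, bounded below in modulus, of unit modulus on the real line and satisfying
`F(θ+iπ)·F(θ) = 1` for real `θ`, extends via the Schwarz reflection
`F(ζ) := 1/conj(F(conj ζ))` to a bounded `2πi`-periodic entire function, and is therefore
constant. -/
theorem statement18 (F : ℂ → ℂ) (K M : ℝ) (hK : 0 < K)
    (hdiff : DifferentiableOn ℂ F {ζ : ℂ | 0 < ζ.im ∧ ζ.im < Real.pi})
    (hcont : ContinuousOn F {ζ : ℂ | 0 ≤ ζ.im ∧ ζ.im ≤ Real.pi})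
    (hbd : ∀ ζ ∈ {ζ : ℂ | 0 ≤ ζ.im ∧ ζ.im ≤ Real.pi},
      K ≤ ‖F ζ‖ ∧ ‖F ζ‖ ≤ M)
    (hmod : ∀ θ : ℝ, ‖F θ‖ = 1)
    (hper : ∀ θ : ℝ, F (θ + Real.pi * I) * F θ = 1) :
    ∃ (Fext : ℂ → ℂ) (c : ℂ),
      Differentiable ℂ Fext ∧
      (∀ ζ : ℂ, 0 ≤ ζ.im → ζ.im ≤ Real.pi → Fext ζ = F ζ) ∧
      (∀ ζ : ℂ, -Real.pi ≤ ζ.im → ζ.im ≤ 0 →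
        Fext ζ = (starRingEnd ℂ (F (starRingEnd ℂ ζ)))⁻¹) ∧
      (∃ B : ℝ, ∀ ζ : ℂ, ‖Fext ζ‖ ≤ B) ∧
      (∀ ζ : ℂ, Fext (ζ + 2 * Real.pi * I) = Fext ζ) ∧
      (∀ ζ : ℂ, Fext ζ = c) := by
  have hπ : (0:ℝ) < Real.pi := Real.pi_pos
  set S : Set ℂ := {ζ : ℂ | 0 ≤ ζ.im ∧ ζ.im ≤ Real.pi} with hS
  set U : Set ℂ := {ζ : ℂ | 0 < ζ.im ∧ ζ.im < Real.pi} with hU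
  have hUeq : U = Complex.im ⁻¹' Set.Ioo 0 Real.pi := rfl
  have hSeq : S = Complex.im ⁻¹' Set.Icc 0 Real.pi := rfl
  have hclo : closure U = S := by
    rw [hUeq, hSeq, Complex.closure_preimage_im, closure_Ioo hπ.ne]
  -- points on the bottom edge
  have hbot : ∀ z : ℂ, z.im = 0 → ‖F z‖ = 1 := by
    intro z hz
    have : z = (z.re : ℂ) := Complex.ext (by simp) (by simp [hz])
    rw [this]; exact hmod z.re
  -- points on the top edge
  have htop : ∀ z : ℂ, z.im = Real.pi → ‖F z‖ = 1 := by
    intro z hz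
    have hzeq : z = (z.re : ℂ) + Real.pi * I := Complex.ext (by simp) (by simp [hz])
    have h1 := hper z.re
    have := congrArg (‖·‖) h1
    rw [norm_mul, hmod, norm_one, mul_one] at this
    rw [hzeq]; exact this
  -- F is nonvanishing on S
  have hne : ∀ z ∈ S, F z ≠ 0 := by
    intro z hz h0
    have := (hbd z hz).1
    rw [h0, norm_zero] at this
    linarith
  -- DiffContOnCl for F
  have hdcF : DiffContOnCl ℂ F (Complex.im ⁻¹' Set.Ioo 0 Real.pi) := by
    refine ⟨hdiff, ?_⟩
    rw [← hUeq, hclo]; exact hcont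
  -- Phragmén–Lindelöf for F : |F| ≤ 1 on S
  have hM : 0 < M := by
    have h0S : (0:ℂ) ∈ S := by simp [hS, hπ.le]
    have := (hbd 0 h0S).1.trans (hbd 0 h0S).2
    linarith
  have hcpos : (0:ℝ) < Real.pi / (Real.pi - 0) := by
    rw [sub_zero]; exact div_pos hπ hπ
  have hPL1 : ∀ z ∈ S, ‖F z‖ ≤ 1 := by
    intro z hz
    refine PhragmenLindelof.horizontal_strip (a := 0) (b := Real.pi) hdcF ⟨0, hcpos, 0, ?_⟩
      (fun w hw => by rw [hbot w hw]) 
      (fun w hw => by rw [htop w hw]) hz.1 hz.2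
    refine Asymptotics.IsBigO.of_bound M ?_
    refine Filter.eventually_inf_principal.2 (Filter.Eventually.of_forall fun w hw => ?_)
    have hwS : w ∈ S := ⟨hw.1.le, hw.2.le⟩
    have := (hbd w hwS).2
    simpa using this
  -- Phragmén–Lindelöf for F⁻¹ : |F|⁻¹ ≤ 1 on S
  have hdcG : DiffContOnCl ℂ (fun z => (F z)⁻¹) (Complex.im ⁻¹' Set.Ioo 0 Real.pi) := by
    refine ⟨DifferentiableOn.inv hdiff (fun z hz => hne z ⟨hz.1.le, hz.2.le⟩), ?_⟩
    rw [← hUeq, hclo]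
    exact ContinuousOn.inv₀ hcont (fun z hz => hne z hz)
  have hPL2 : ∀ z ∈ S, (‖F z‖)⁻¹ ≤ 1 := by
    intro z hz
    have : ‖(F z)⁻¹‖ ≤ 1 := by
      refine PhragmenLindelof.horizontal_strip (a := 0) (b := Real.pi) (f := fun z => (F z)⁻¹) hdcG ⟨0, hcpos, 0, ?_⟩
        (fun w hw => by rw [norm_inv, hbot w hw]; norm_num)
        (fun w hw => by rw [norm_inv, htop w hw]; norm_num) hz.1 hz.2
      refine Asymptotics.IsBigO.of_bound K⁻¹ ?_
      refine Filter.eventually_inf_principal.2 (Filter.Eventually.of_forall fun w hw => ?_)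
      have hwS : w ∈ S := ⟨hw.1.le, hw.2.le⟩
      have h1 := (hbd w hwS).1
      have : ‖(F w)⁻¹‖ ≤ K⁻¹ := by
        rw [norm_inv]
        exact inv_anti₀ hK h1
      simpa using this
    simpa [norm_inv] using this
  -- hence |F| = 1 on S
  have habs1 : ∀ z ∈ S, ‖F z‖ = 1 := by
    intro z hz
    have hpos : 0 < ‖F z‖ := lt_of_lt_of_le hK (hbd z hz).1
    refine le_antisymm (hPL1 z hz) ?_
    have h2 := hPL2 z hz
    calc (1:ℝ) = ‖F z‖ * (‖F z‖)⁻¹ := (mul_inv_cancel₀ hpos.ne').symm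
      _ ≤ ‖F z‖ * 1 := mul_le_mul_of_nonneg_left h2 hpos.le
      _ = ‖F z‖ := mul_one _
  -- maximum modulus: F is constant on U
  have hUopen : IsOpen U := by
    rw [hUeq]; exact isOpen_Ioo.preimage continuous_im
  have hUconv : Convex ℝ U := by
    rw [hUeq]
    exact (convex_Ioo (0:ℝ) Real.pi).linear_preimage Complex.imLm
  have hz0 : ((Real.pi / 2 : ℝ) * I : ℂ) ∈ U := by
    constructor <;> simp [hπ] <;> linarith
  set z0 : ℂ := (Real.pi / 2 : ℝ) * I with hz0def
  set c : ℂ := F z0 with hc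
  have hz0S : z0 ∈ S := ⟨hz0.1.le, hz0.2.le⟩
  have hmax : IsMaxOn (norm ∘ F) U z0 := by
    intro x hx
    have hxS : x ∈ S := ⟨hx.1.le, hx.2.le⟩
    simp only [Function.comp_apply, Set.mem_setOf_eq,
      habs1 x hxS, habs1 z0 hz0S, le_refl]
  have hconstU : Set.EqOn F (Function.const ℂ c) U :=
    Complex.eqOn_of_isPreconnected_of_isMaxOn_norm hUconv.isPreconnected hUopen hdiff hz0 hmax
  have hconstS : ∀ z ∈ S, F z = c := by
    intro z hz
    have hzcl : z ∈ closure U := by rw [hclo]; exact hz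
    haveI hneB : (nhdsWithin z U).NeBot := mem_closure_iff_nhdsWithin_neBot.mp hzcl
    have h1 : Filter.Tendsto F (nhdsWithin z U) (nhds (F z)) :=
      (hcont z hz).mono (fun x hx => ⟨hx.1.le, hx.2.le⟩)
    have heq : ∀ᶠ x in nhdsWithin z U, (fun _ => c) x = F x :=
      eventually_nhdsWithin_of_forall fun x hx => (hconstU hx).symm
    have h2 : Filter.Tendsto F (nhdsWithin z U) (nhds c) := tendsto_const_nhds.congr' heq
    exact tendsto_nhds_unique h1 h2
  have hcabs : ‖c‖ = 1 := habs1 z0 hz0S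
  have hcconj : c = ((starRingEnd ℂ) c)⁻¹ := by
    refine eq_inv_of_mul_eq_one_left ?_
    rw [Complex.mul_conj]
    norm_cast
    rw [Complex.normSq_eq_norm_sq, hcabs]; norm_num
  refine ⟨fun _ => c, c, differentiable_const _, ?_, ?_, ⟨1, fun ζ => by rw [hcabs]⟩,
    fun ζ => rfl, fun ζ => rfl⟩
  · intro ζ h1 h2
    exact (hconstS ζ ⟨h1, h2⟩).symm
  · intro ζ h1 h2
    have hconjS : (starRingEnd ℂ) ζ ∈ S := by
      constructor <;> simp [Complex.conj_im] <;> linarith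
    rw [hconstS _ hconjS]
    exact hcconj
end
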